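/- For every n ≥ 1, the number of non-ambiguous trees with n vertices (over all binary tree shapes with n vertices) equals the number of labelled ordered trees with n vertices in the class NOT. -/

import Mathlib

inductive BT : Type where
  | nil : BT
  | node : BT → BT → BT
  deriving DecidableEq

namespace BT

/-- The list of positions (paths from the root, `false` = left step, `true` = right step)
of the vertices of a binary tree. -/
def paths : BT → List (List Bool)
  | .nil => []
  | .node l r => [] :: (l.paths.map (List.cons false) ++ r.paths.map (List.cons true))

/-- Number of vertices. -/
def size (B : BT) : ℕ := B.paths.length

/-- The set of left children (positions ending with a left step). -/
def leftVertices (B : BT) : Finset (List Bool) :=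
  B.paths.toFinset.filter (fun p => p.getLast? = some false)

/-- The set of right children (positions ending with a right step). -/
def rightVertices (B : BT) : Finset (List Bool) :=
  B.paths.toFinset.filter (fun p => p.getLast? = some true)

end BT

/-- A non-ambiguous tree of shape `B`: bijective labellings of the left (resp. right)
children by `Fin |LV B|` (resp. `Fin |RV B|`), decreasing along ancestry. -/
structure NAT (B : BT) where
  fL : {p // p ∈ B.leftVertices} → Fin B.leftVertices.card
  fR : {p // p ∈ B.rightVertices} → Fin B.rightVertices.card
  bijL : Function.Bijective fL
  bijR : Function.Bijective fR
  ancL : ∀ u v : {p // p ∈ B.leftVertices}, u.1 <+: v.1 → u ≠ v → (fL v : ℕ) < fL u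
  ancR : ∀ u v : {p // p ∈ B.rightVertices}, u.1 <+: v.1 → u ≠ v → (fR v : ℕ) < fR u

inductive OT : Type where
  | node : List OT → OT

namespace OT

mutual
  /-- The list of positions (paths of child indices from the root) of the vertices
  of an ordered tree. -/
  def paths : OT → List (List ℕ)
    | .node cs => [] :: pathsAux 0 cs
  /-- Positions of the vertices of a forest, the `i`-th tree being reached by index `n + i`. -/
  def pathsAux : ℕ → List OT → List (List ℕ)
    | _, [] => []
    | n, c :: cs => (paths c).map (List.cons n) ++ pathsAux (n + 1) cs
end

/-- Number of vertices of an ordered tree. -/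
def size (t : OT) : ℕ := t.paths.length

/-- The non-root vertices of an ordered tree. -/
def nonRoot (t : OT) : Finset (List ℕ) := t.paths.toFinset.erase []

end OT

/-- A labelling of an ordered tree `O` making it a member of the class `NOT`:
every non-root vertex gets a colour (`true` = red, `false` = blue) and a label; the labels
of the red (resp. blue) vertices are exactly `1,…,r` (resp. `1,…,b`) without repetition
(the root implicitly carrying the maximal pair `(r+1, b+1)`); red children of the root come
before blue ones; colours alternate along edges below the root; and the label of any red
(resp. blue) vertex is strictly greater than the labels of the red (resp. blue) vertices
among its descendants and its siblings lying to its right. -/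
structure NOTL (O : OT) where
  colour : {p // p ∈ O.nonRoot} → Bool
  label : {p // p ∈ O.nonRoot} → ℕ
  bijRed : Set.BijOn label {v | colour v = true}
    (Set.Icc 1 (Set.ncard {v : {p // p ∈ O.nonRoot} | colour v = true}))
  bijBlue : Set.BijOn label {v | colour v = false}
    (Set.Icc 1 (Set.ncard {v : {p // p ∈ O.nonRoot} | colour v = false}))
  rootOrder : ∀ (i j : ℕ) (hi : [i] ∈ O.nonRoot) (hj : [j] ∈ O.nonRoot),
    colour ⟨[i], hi⟩ = true → colour ⟨[j], hj⟩ = false → i < j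
  alternating : ∀ (v w : {p // p ∈ O.nonRoot}), (∃ i, w.1 = v.1 ++ [i]) →
    colour w = ! colour v
  decreasing : ∀ (v w : {p // p ∈ O.nonRoot}), colour v = colour w →
    ((v.1 <+: w.1 ∧ v ≠ w) ∨ ∃ q i j, v.1 = q ++ [i] ∧ w.1 = q ++ [j] ∧ i < j) →
    label w < label v

namespace AuxNAT
open List

theorem bool_eq_not_of_ne {c d : Bool} (h : ¬ c = d) : c = !d := by
  cases c <;> cases d <;> simp_all

/-- length of the initial run of `d`s. -/
def run (d : Bool) : List Bool → ℕ
  | [] => 0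
  | c :: q => if c = d then run d q + 1 else 0

/-- translation of binary-tree paths (within a spine of direction `d`, starting index `k`)
to ordered-tree paths. -/
def tr : Bool → ℕ → List Bool → List ℕ
  | _, k, [] => [k]
  | d, k, c :: q => if c = d then tr d (k+1) q else k :: tr (!d) 0 q

theorem tr_cons (d : Bool) (k : ℕ) (q : List Bool) :
    ∃ t, tr d k q = (k + run d q) :: t := by
  induction q generalizing k with
  | nil => exact ⟨[], by simp [tr, run]⟩
  | cons c q ih =>
    by_cases h : c = d
    · obtain ⟨t, ht⟩ := ih (k+1)
      exact ⟨t, by simp [tr, run, h, ht]; omega⟩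
    · exact ⟨tr (!d) 0 q, by simp [tr, run, h]⟩

theorem tr_ne_nil (d : Bool) (k : ℕ) (q : List Bool) : tr d k q ≠ [] := by
  obtain ⟨t, ht⟩ := tr_cons d k q
  simp [ht]

theorem tr_inj (d : Bool) (k : ℕ) {q q' : List Bool} (h : tr d k q = tr d k q') :
    q = q' := by
  induction q generalizing q' k d with
  | nil =>
    cases q' with
    | nil => rfl
    | cons c' q' =>
      by_cases h' : c' = d <;> simp [tr, h'] at h
      · obtain ⟨t, ht⟩ := tr_cons d (k+1) q'
        rw [ht] at h
        simp at h; omega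
      · exact absurd h (tr_ne_nil _ _ _)
  | cons c q ih =>
    cases q' with
    | nil =>
      by_cases h' : c = d <;> simp [tr, h'] at h
      · obtain ⟨t, ht⟩ := tr_cons d (k+1) q
        rw [ht] at h; simp at h; omega
      · exact absurd h (tr_ne_nil _ _ _)
    | cons c' q' =>
      by_cases h1 : c = d <;> by_cases h2 : c' = d <;> simp [tr, h1, h2] at h
      · rw [ih _ _ h, h1, h2]
      · obtain ⟨t, ht⟩ := tr_cons d (k+1) q
        rw [ht] at h; simp at h; omega
      · obtain ⟨t, ht⟩ := tr_cons d (k+1) q'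
        rw [ht] at h; simp at h; omega
      · rw [ih _ _ h, bool_eq_not_of_ne h1, bool_eq_not_of_ne h2]

/-- last letter of `d :: q`. -/
def lastc : Bool → List Bool → Bool
  | d, [] => d
  | _, c :: q => lastc c q

theorem lastc_eq (d : Bool) (q : List Bool) : (d :: q).getLast? = some (lastc d q) := by
  induction q generalizing d with
  | nil => rfl
  | cons c q ih => rw [List.getLast?_cons_cons]; exact ih c

theorem tr_replicate (d : Bool) (k j : ℕ) : tr d k (List.replicate j d) = [k + j] := by
  induction j generalizing k with
  | zero => simp [tr]
  | succ j ih => simp [List.replicate_succ, tr, ih]; omega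

theorem tr_eq_singleton {d : Bool} {k x : ℕ} {q : List Bool} (h : tr d k q = [x]) :
    ∃ j, q = List.replicate j d ∧ x = k + j := by
  induction q generalizing k with
  | nil => simp [tr] at h; exact ⟨0, by simp [h.symm]⟩
  | cons c q ih =>
    by_cases hc : c = d <;> simp [tr, hc] at h
    · obtain ⟨j, hj, hx⟩ := ih h
      exact ⟨j + 1, by simp [List.replicate_succ, hj, hc], by omega⟩
    · exact absurd h.2 (tr_ne_nil _ _ _)

theorem lastc_parity (d : Bool) (k : ℕ) (q : List Bool) :
    lastc d q = d ↔ (tr d k q).length % 2 = 1 := by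
  induction q generalizing d k with
  | nil => simp [lastc, tr]
  | cons c q ih =>
    by_cases hc : c = d
    · subst hc; simpa [lastc, tr] using ih c (k+1)
    · rw [bool_eq_not_of_ne hc]
      simp only [lastc, tr, if_neg (by simp : ¬ (!d) = d)]
      rw [List.length_cons]
      constructor
      · intro h
        have h3 : ¬ ((tr (!d) 0 q).length % 2 = 1) := by
          intro hx
          have := (ih (!d) 0).2 hx
          rw [h] at this
          cases d <;> simp at this
        omega
      · intro h
        have h3 : ¬ lastc (!d) q = !d := by
          intro hx
          have := (ih (!d) 0).1 hx
          omega
        have h4 := bool_eq_not_of_ne h3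
        simpa using h4

theorem tr_prefix {d : Bool} {k : ℕ} {q q' : List Bool}
    (h : tr d k q <+: tr d k q') : q <+: q' := by
  induction q generalizing q' k d with
  | nil => exact List.nil_prefix
  | cons c q ih =>
    simp only [tr] at h
    cases q' with
    | nil =>
      by_cases hc : c = d
      · rw [if_pos hc] at h
        simp only [tr] at h
        obtain ⟨t, ht⟩ := tr_cons d (k+1) q
        rw [ht] at h
        have := (List.cons_prefix_cons.mp h).1
        omega
      · rw [if_neg hc] at h
        simp only [tr] at h
        have := (List.cons_prefix_cons.mp h).2
        exact absurd (List.eq_nil_of_prefix_nil this) (tr_ne_nil _ _ _)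
    | cons c' q' =>
      simp only [tr] at h
      by_cases h1 : c = d <;> by_cases h2 : c' = d
      · rw [if_pos h1, if_pos h2] at h
        rw [h1, h2]
        exact List.cons_prefix_cons.mpr ⟨rfl, ih h⟩
      · rw [if_pos h1, if_neg h2] at h
        obtain ⟨t, ht⟩ := tr_cons d (k+1) q
        rw [ht] at h
        have := (List.cons_prefix_cons.mp h).1
        omega
      · rw [if_neg h1, if_pos h2] at h
        obtain ⟨t, ht⟩ := tr_cons d (k+1) q'
        rw [ht] at h
        have := (List.cons_prefix_cons.mp h).1
        omega
      · rw [if_neg h1, if_neg h2] at h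
        rw [bool_eq_not_of_ne h1, bool_eq_not_of_ne h2]
        exact List.cons_prefix_cons.mpr ⟨rfl, ih (List.cons_prefix_cons.mp h).2⟩

theorem tr_sibling {d : Bool} {k : ℕ} {q q' : List Bool} {u : List ℕ} {i j : ℕ}
    (hq : tr d k q = u ++ [i]) (hq' : tr d k q' = u ++ [j]) (hij : i < j) :
    ∃ c a, q' = q ++ List.replicate (a + 1) c := by
  induction q generalizing q' u k d with
  | nil =>
    simp only [tr] at hq
    have hu : u = [] := by
      cases u with
      | nil => rfl
      | cons a v => simp at hq
    subst hu
    have hk : k = i := by simpa using hq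
    subst hk
    simp only [List.nil_append] at hq'
    obtain ⟨m, hm, hj⟩ := tr_eq_singleton hq'
    refine ⟨d, j - k - 1, ?_⟩
    rw [hm]
    simp only [List.nil_append]
    congr 1
    omega
  | cons c q ih =>
    simp only [tr] at hq
    by_cases hc : c = d
    · rw [if_pos hc] at hq
      cases q' with
      | nil =>
        exfalso
        simp only [tr] at hq'
        have hu : u = [] := by
          cases u with
          | nil => rfl
          | cons a v => simp at hq'
        subst hu
        have hk : k = j := by simpa using hq'
        obtain ⟨t, ht⟩ := tr_cons d (k+1) q
        rw [ht] at hq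
        simp only [List.nil_append] at hq
        have := (List.cons.injEq _ _ _ _ ▸ hq)
        rw [List.cons_eq_cons] at hq
        omega
      | cons c' q' =>
        simp only [tr] at hq'
        by_cases hc' : c' = d
        · rw [if_pos hc'] at hq'
          obtain ⟨cc, a, ha⟩ := ih hq hq'
          exact ⟨cc, a, by rw [ha, hc, hc']; simp⟩
        · rw [if_neg hc'] at hq'
          exfalso
          cases u with
          | nil =>
            simp only [List.nil_append] at hq'
            rw [List.cons_eq_cons] at hq'
            exact absurd hq'.2 (tr_ne_nil _ _ _)
          | cons a v =>
            simp only [List.cons_append] at hq'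
            rw [List.cons_eq_cons] at hq'
            obtain ⟨t, ht⟩ := tr_cons d (k+1) q
            rw [ht] at hq
            simp only [List.cons_append] at hq
            rw [List.cons_eq_cons] at hq
            omega
    · rw [if_neg hc] at hq
      cases q' with
      | nil =>
        exfalso
        simp only [tr] at hq'
        have hu : u = [] := by
          cases u with
          | nil => rfl
          | cons a v => simp at hq'
        subst hu
        simp only [List.nil_append] at hq
        rw [List.cons_eq_cons] at hq
        exact absurd hq.2 (tr_ne_nil _ _ _)
      | cons c' q' =>
        simp only [tr] at hq'
        by_cases hc' : c' = d
        · rw [if_pos hc'] at hq'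
          exfalso
          cases u with
          | nil =>
            simp only [List.nil_append] at hq
            rw [List.cons_eq_cons] at hq
            exact absurd hq.2 (tr_ne_nil _ _ _)
          | cons a v =>
            simp only [List.cons_append] at hq
            rw [List.cons_eq_cons] at hq
            obtain ⟨t, ht⟩ := tr_cons d (k+1) q'
            rw [ht] at hq'
            simp only [List.cons_append] at hq'
            rw [List.cons_eq_cons] at hq'
            omega
        · rw [if_neg hc'] at hq'
          cases u with
          | nil =>
            exfalso
            simp only [List.nil_append] at hq
            rw [List.cons_eq_cons] at hq
            exact absurd hq.2 (tr_ne_nil _ _ _)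
          | cons a v =>
            simp only [List.cons_append] at hq hq'
            rw [List.cons_eq_cons] at hq hq'
            obtain ⟨cc, aa, ha⟩ := ih hq.2 hq'.2
            exact ⟨cc, aa, by
              rw [bool_eq_not_of_ne hc, bool_eq_not_of_ne hc', ha]
              simp⟩

theorem tr_append_flip {d b : Bool} {q : List Bool} (h : lastc d q = b) (k : ℕ)
    (s : List Bool) : tr d k (q ++ (!b) :: s) = tr d k q ++ tr (!b) 0 s := by
  induction q generalizing d k with
  | nil =>
    simp only [lastc] at h
    subst h
    simp [tr]
  | cons c q ih =>
    simp only [lastc] at h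
    by_cases hc : c = d
    · subst hc
      simp only [List.cons_append, tr, if_pos rfl]
      exact ih h (k+1)
    · rw [bool_eq_not_of_ne hc] at h ⊢
      simp only [List.cons_append, tr, if_neg (by simp : ¬ (!d) = d), List.append_eq]
      rw [ih h 0]

theorem tr_append_run {d b : Bool} {q : List Bool} (h : lastc d q = b) (k a : ℕ) :
    ∃ u x, tr d k q = u ++ [x] ∧ tr d k (q ++ List.replicate a b) = u ++ [x + a] := by
  induction q generalizing d k with
  | nil =>
    simp only [lastc] at h
    subst h
    exact ⟨[], k, by simp [tr], by simp [tr_replicate]⟩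
  | cons c q ih =>
    simp only [lastc] at h
    by_cases hc : c = d
    · subst hc
      obtain ⟨u, x, h1, h2⟩ := ih h (k+1)
      exact ⟨u, x, by simpa [tr] using h1, by simpa [List.cons_append, tr] using h2⟩
    · rw [bool_eq_not_of_ne hc] at h
      obtain ⟨u, x, h1, h2⟩ := ih h 0
      rw [bool_eq_not_of_ne hc]
      refine ⟨k :: u, x, ?_, ?_⟩
      · simp only [tr, if_neg (by simp : ¬ (!d) = d), h1, List.cons_append]
      · simp only [List.cons_append, tr, if_neg (by simp : ¬ (!d) = d), List.append_eq, h2]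

/-- the spine of direction `d` of a binary tree, as a list of ordered trees. -/
def spine : Bool → BT → List OT
  | _, .nil => []
  | false, .node a b => .node (spine true b) :: spine false a
  | true, .node a b => .node (spine false a) :: spine true b

/-- rebuilding the binary tree from a spine. -/
def unb : Bool → List OT → BT
  | _, [] => .nil
  | false, .node ds :: rest => .node (unb false rest) (unb true ds)
  | true, .node ds :: rest => .node (unb false ds) (unb true rest)

def Phi (l r : BT) : OT := .node (spine false l ++ spine true r)

def llen : BT → ℕ
  | .nil => 0
  | .node a _ => llen a + 1

def rlen : BT → ℕ
  | .nil => 0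
  | .node _ b => rlen b + 1

theorem unb_spine (d : Bool) (B : BT) : unb d (spine d B) = B := by
  induction B generalizing d with
  | nil => cases d <;> simp [spine, unb]
  | node a b iha ihb =>
    cases d <;> simp [spine, unb, iha false, iha true, ihb false, ihb true]

theorem spine_unb : ∀ (n : ℕ) (L : List OT), sizeOf L = n → ∀ d, spine d (unb d L) = L := by
  intro n
  induction n using Nat.strong_induction_on with
  | _ n ih =>
    intro L hL d
    cases L with
    | nil => cases d <;> simp [spine, unb]
    | cons t rest =>
      cases t with
      | node ds =>
        have h1 : sizeOf ds < n := by
          subst hL; simp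
          all_goals omega
        have h2 : sizeOf rest < n := by
          subst hL; simp
          all_goals omega
        cases d
        · simp only [unb, spine]
          rw [ih _ h1 ds rfl true, ih _ h2 rest rfl false]
        · simp only [unb, spine]
          rw [ih _ h1 ds rfl false, ih _ h2 rest rfl true]

theorem llen_unb (L : List OT) : llen (unb false L) = L.length := by
  induction L with
  | nil => simp [unb, llen]
  | cons t rest ih => cases t with | node ds => simpa [unb, llen] using ih

theorem rlen_unb (L : List OT) : rlen (unb true L) = L.length := by
  induction L with
  | nil => simp [unb, rlen]
  | cons t rest ih => cases t with | node ds => simpa [unb, rlen] using ih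

theorem spine_length_false (B : BT) : (spine false B).length = llen B := by
  induction B with
  | nil => simp [spine, llen]
  | node a b iha ihb => simpa [spine, llen] using iha

theorem spine_length_true (B : BT) : (spine true B).length = rlen B := by
  induction B with
  | nil => simp [spine, rlen]
  | node a b iha ihb => simpa [spine, rlen] using ihb

theorem mem_paths_node {p : List Bool} {a b : BT} :
    p ∈ (BT.node a b).paths ↔
      p = [] ∨ (∃ q ∈ a.paths, p = false :: q) ∨ (∃ q ∈ b.paths, p = true :: q) := by
  simp [BT.paths, List.mem_map, List.mem_append, eq_comm]

theorem bt_prefix_closed {B : BT} {p p' : List Bool} (h : p <+: p') (h' : p' ∈ B.paths) :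
    p ∈ B.paths := by
  induction B generalizing p p' with
  | nil => simp [BT.paths] at h'
  | node a b iha ihb =>
    rcases mem_paths_node.mp h' with rfl | ⟨q, hq, rfl⟩ | ⟨q, hq, rfl⟩
    · rw [List.prefix_nil.mp h]; exact mem_paths_node.mpr (Or.inl rfl)
    · cases p with
      | nil => exact mem_paths_node.mpr (Or.inl rfl)
      | cons c pp =>
        obtain ⟨rfl, hpre⟩ := List.cons_prefix_cons.mp h
        exact mem_paths_node.mpr (Or.inr (Or.inl ⟨pp, iha hpre hq, rfl⟩))
    · cases p with
      | nil => exact mem_paths_node.mpr (Or.inl rfl)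
      | cons c pp =>
        obtain ⟨rfl, hpre⟩ := List.cons_prefix_cons.mp h
        exact mem_paths_node.mpr (Or.inr (Or.inr ⟨pp, ihb hpre hq, rfl⟩))

theorem replicate_mem_llen {B : BT} {j : ℕ} (h : List.replicate j false ∈ B.paths) :
    j < llen B := by
  induction B generalizing j with
  | nil => simp [BT.paths] at h
  | node a b iha ihb =>
    cases j with
    | zero => simp [llen]
    | succ j =>
      rw [List.replicate_succ] at h
      rcases mem_paths_node.mp h with h1 | ⟨q, hq, he⟩ | ⟨q, hq, he⟩
      · simp at h1
      · obtain ⟨rfl⟩ : q = List.replicate j false := by simpa using he.symm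
        have := iha hq
        simp [llen]; omega
      · simp at he

theorem replicate_mem_rlen {B : BT} {j : ℕ} (h : List.replicate j true ∈ B.paths) :
    j < rlen B := by
  induction B generalizing j with
  | nil => simp [BT.paths] at h
  | node a b iha ihb =>
    cases j with
    | zero => simp [rlen]
    | succ j =>
      rw [List.replicate_succ] at h
      rcases mem_paths_node.mp h with h1 | ⟨q, hq, he⟩ | ⟨q, hq, he⟩
      · simp at h1
      · simp at he
      · obtain ⟨rfl⟩ : q = List.replicate j true := by simpa using he.symm
        have := ihb hq
        simp [rlen]; omega

theorem run_prefix (d : Bool) (q : List Bool) : List.replicate (run d q) d <+: q := by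
  induction q with
  | nil => simp [run]
  | cons c q ih =>
    by_cases hc : c = d
    · subst hc
      rw [run, if_pos rfl, List.replicate_succ]
      exact List.cons_prefix_cons.mpr ⟨rfl, ih⟩
    · rw [run, if_neg hc]
      simp

theorem run_lt_llen {B : BT} {q : List Bool} (h : q ∈ B.paths) : run false q < llen B :=
  replicate_mem_llen (bt_prefix_closed (run_prefix false q) h)

theorem run_lt_rlen {B : BT} {q : List Bool} (h : q ∈ B.paths) : run true q < rlen B :=
  replicate_mem_rlen (bt_prefix_closed (run_prefix true q) h)

/-- map from binary-tree positions (nonempty) to ordered-tree positions;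
`m` is the number of red children of the root. -/
def pm (m : ℕ) : List Bool → List ℕ
  | [] => []
  | false :: q => tr false 0 q
  | true :: q => tr true m q

/-- the canonical colour of an ordered-tree position. -/
def ccol (m : ℕ) (o : List ℕ) : Bool := decide ((o.headD 0 < m) = (o.length % 2 = 1))

theorem nil_mem_ot_paths (t : OT) : [] ∈ t.paths := by
  cases t with
  | node cs => simp [OT.paths]

theorem tr_headD (d : Bool) (k : ℕ) (q : List Bool) : (tr d k q).headD 0 = k + run d q := by
  obtain ⟨t, ht⟩ := tr_cons d k q
  simp [ht]

theorem pathsAux_append (L1 L2 : List OT) (k : ℕ) :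
    OT.pathsAux k (L1 ++ L2) = OT.pathsAux k L1 ++ OT.pathsAux (k + L1.length) L2 := by
  induction L1 generalizing k with
  | nil => simp [OT.pathsAux]
  | cons c cs ih =>
    have heq : k + 1 + cs.length = k + (cs.length + 1) := by omega
    simp only [List.cons_append, OT.pathsAux, List.append_eq, List.length_cons]
    rw [ih (k+1), heq, List.append_assoc]

theorem mem_pathsAux_spine (B : BT) (d : Bool) (k : ℕ) (o : List ℕ) :
    o ∈ OT.pathsAux k (spine d B) ↔ ∃ q ∈ B.paths, o = tr d k q := by
  induction B generalizing d k o with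
  | nil => cases d <;> simp [spine, OT.pathsAux, BT.paths]
  | node a b iha ihb =>
    cases d
    · simp only [spine, OT.pathsAux, OT.paths, List.mem_append, List.mem_map, List.mem_cons]
      constructor
      · rintro (⟨o', ho', rfl⟩ | h)
        · rcases ho' with rfl | ho'
          · exact ⟨[], mem_paths_node.mpr (Or.inl rfl), by simp [tr]⟩
          · obtain ⟨q, hq, rfl⟩ := (ihb true 0 o').mp ho'
            exact ⟨true :: q, mem_paths_node.mpr (Or.inr (Or.inr ⟨q, hq, rfl⟩)),
              by simp [tr]⟩
        · obtain ⟨q, hq, rfl⟩ := (iha false (k+1) o).mp h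
          exact ⟨false :: q, mem_paths_node.mpr (Or.inr (Or.inl ⟨q, hq, rfl⟩)),
            by simp [tr]⟩
      · rintro ⟨q, hq, rfl⟩
        rcases mem_paths_node.mp hq with rfl | ⟨q', hq', rfl⟩ | ⟨q', hq', rfl⟩
        · exact Or.inl ⟨[], Or.inl rfl, by simp [tr]⟩
        · exact Or.inr (by
            rw [show tr false k (false :: q') = tr false (k+1) q' by simp [tr]]
            exact (iha false (k+1) _).mpr ⟨q', hq', rfl⟩)
        · refine Or.inl ⟨tr true 0 q', Or.inr ((ihb true 0 _).mpr ⟨q', hq', rfl⟩), ?_⟩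
          simp [tr]
    · simp only [spine, OT.pathsAux, OT.paths, List.mem_append, List.mem_map, List.mem_cons]
      constructor
      · rintro (⟨o', ho', rfl⟩ | h)
        · rcases ho' with rfl | ho'
          · exact ⟨[], mem_paths_node.mpr (Or.inl rfl), by simp [tr]⟩
          · obtain ⟨q, hq, rfl⟩ := (iha false 0 o').mp ho'
            exact ⟨false :: q, mem_paths_node.mpr (Or.inr (Or.inl ⟨q, hq, rfl⟩)),
              by simp [tr]⟩
        · obtain ⟨q, hq, rfl⟩ := (ihb true (k+1) o).mp h
          exact ⟨true :: q, mem_paths_node.mpr (Or.inr (Or.inr ⟨q, hq, rfl⟩)),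
            by simp [tr]⟩
      · rintro ⟨q, hq, rfl⟩
        rcases mem_paths_node.mp hq with rfl | ⟨q', hq', rfl⟩ | ⟨q', hq', rfl⟩
        · exact Or.inl ⟨[], Or.inl rfl, by simp [tr]⟩
        · refine Or.inl ⟨tr false 0 q', Or.inr ((iha false 0 _).mpr ⟨q', hq', rfl⟩), ?_⟩
          simp [tr]
        · exact Or.inr (by
            rw [show tr true k (true :: q') = tr true (k+1) q' by simp [tr]]
            exact (ihb true (k+1) _).mpr ⟨q', hq', rfl⟩)

theorem pathsAux_length (cs : List OT) (k : ℕ) :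
    (OT.pathsAux k cs).length = (cs.map OT.size).sum := by
  induction cs generalizing k with
  | nil => simp [OT.pathsAux]
  | cons c cs ih => simp [OT.pathsAux, ih, OT.size]

theorem ot_size_node (cs : List OT) : (OT.node cs).size = 1 + (cs.map OT.size).sum := by
  simp [OT.size, OT.paths, pathsAux_length]
  omega

theorem bt_size_node (a b : BT) : (BT.node a b).size = a.size + b.size + 1 := by
  simp [BT.size, BT.paths]
  all_goals omega

theorem spine_size (d : Bool) (B : BT) : ((spine d B).map OT.size).sum = B.size := by
  induction B generalizing d with
  | nil => cases d <;> simp [spine, BT.size, BT.paths]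
  | node a b iha ihb =>
    cases d <;>
      simp [spine, ot_size_node, iha false, iha true, ihb false, ihb true, bt_size_node] <;>
      omega

theorem Phi_size (l r : BT) : (Phi l r).size = (BT.node l r).size := by
  simp [Phi, ot_size_node, spine_size, bt_size_node]
  omega

theorem mem_nonRoot {O : OT} {o : List ℕ} :
    o ∈ O.nonRoot ↔ o ∈ O.paths ∧ o ≠ [] := by
  simp [OT.nonRoot, Finset.mem_erase, List.mem_toFinset, and_comm]

theorem mem_nonRoot_phi {l r : BT} {o : List ℕ} :
    o ∈ (Phi l r).nonRoot ↔
      ∃ p, (p ∈ (BT.node l r).paths ∧ p ≠ []) ∧ o = pm (llen l) p := by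
  rw [mem_nonRoot]
  constructor
  · rintro ⟨h1, h2⟩
    simp only [Phi, OT.paths, List.mem_cons] at h1
    rcases h1 with rfl | h1
    · exact absurd rfl h2
    · rw [pathsAux_append, List.mem_append, spine_length_false] at h1
      rcases h1 with h1 | h1
      · obtain ⟨q, hq, rfl⟩ := (mem_pathsAux_spine l false 0 o).mp h1
        exact ⟨false :: q, ⟨mem_paths_node.mpr (Or.inr (Or.inl ⟨q, hq, rfl⟩)), by simp⟩,
          by simp [pm]⟩
      · obtain ⟨q, hq, rfl⟩ := (mem_pathsAux_spine r true (0 + llen l) o).mp h1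
        refine ⟨true :: q, ⟨mem_paths_node.mpr (Or.inr (Or.inr ⟨q, hq, rfl⟩)), by simp⟩, ?_⟩
        simp [pm]
  · rintro ⟨p, ⟨hp, hne⟩, rfl⟩
    rcases mem_paths_node.mp hp with rfl | ⟨q, hq, rfl⟩ | ⟨q, hq, rfl⟩
    · exact absurd rfl hne
    · constructor
      · simp only [Phi, OT.paths, List.mem_cons]
        refine Or.inr ?_
        rw [pathsAux_append, List.mem_append, spine_length_false]
        exact Or.inl ((mem_pathsAux_spine l false 0 _).mpr ⟨q, hq, by simp [pm]⟩)
      · simp only [pm]; exact tr_ne_nil _ _ _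
    · constructor
      · simp only [Phi, OT.paths, List.mem_cons]
        refine Or.inr ?_
        rw [pathsAux_append, List.mem_append, spine_length_false]
        refine Or.inr ((mem_pathsAux_spine r true (0 + llen l) _).mpr ⟨q, hq, by simp [pm]⟩)
      · simp only [pm]; exact tr_ne_nil _ _ _

theorem pm_inj {l r : BT} {p p' : List Bool}
    (hp : p ∈ (BT.node l r).paths) (hp' : p' ∈ (BT.node l r).paths)
    (h : pm (llen l) p = pm (llen l) p') (hne : p ≠ []) (hne' : p' ≠ []) : p = p' := by
  rcases mem_paths_node.mp hp with rfl | ⟨q, hq, rfl⟩ | ⟨q, hq, rfl⟩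
  · exact absurd rfl hne
  · rcases mem_paths_node.mp hp' with rfl | ⟨q', hq', rfl⟩ | ⟨q', hq', rfl⟩
    · exact absurd rfl hne'
    · simp only [pm] at h
      rw [tr_inj _ _ h]
    · exfalso
      simp only [pm] at h
      have h1 := tr_headD false 0 q
      have h2 := tr_headD true (llen l) q'
      rw [h] at h1
      have := run_lt_llen hq
      omega
  · rcases mem_paths_node.mp hp' with rfl | ⟨q', hq', rfl⟩ | ⟨q', hq', rfl⟩
    · exact absurd rfl hne'
    · exfalso
      simp only [pm] at h
      have h1 := tr_headD false 0 q'
      have h2 := tr_headD true (llen l) q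
      rw [h] at h2
      have := run_lt_llen hq'
      omega
    · simp only [pm] at h
      rw [tr_inj _ _ h]

theorem ccol_pm {l r : BT} {p : List Bool}
    (hp : p ∈ (BT.node l r).paths) (hne : p ≠ []) :
    ccol (llen l) (pm (llen l) p) = true ↔ p.getLast? = some false := by
  rcases mem_paths_node.mp hp with rfl | ⟨q, hq, rfl⟩ | ⟨q, hq, rfl⟩
  · exact absurd rfl hne
  · simp only [pm, ccol, decide_eq_true_eq, lastc_eq, Option.some.injEq]
    have hhead : (tr false 0 q).headD 0 = 0 + run false q := tr_headD false 0 q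
    have hlt : run false q < llen l := run_lt_llen hq
    have hpar := lastc_parity false 0 q
    constructor
    · intro hcc
      have : (tr false 0 q).length % 2 = 1 := by rw [← of_decide_eq_true hcc]; omega
      exact hpar.mpr this
    · intro hlast
      have h2 := hpar.mp hlast
      have hgoal : (tr false 0 q).headD 0 < llen l := by omega
      rw [List.headD_eq_head?_getD] at hgoal
      simp [hgoal, h2]
  · simp only [pm, ccol, decide_eq_true_eq, lastc_eq, Option.some.injEq]
    have hhead : (tr true (llen l) q).headD 0 = llen l + run true q := tr_headD true (llen l) q
    have hpar := lastc_parity true (llen l) q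
    constructor
    · intro hcc
      have hnot : ¬ ((tr true (llen l) q).headD 0 < llen l) := by omega
      have : ¬ ((tr true (llen l) q).length % 2 = 1) := by
        intro hx
        rw [of_decide_eq_true hcc] at hnot
        exact hnot hx
      have h3 : ¬ lastc true q = true := fun hx => this (hpar.mp hx)
      simpa using bool_eq_not_of_ne h3
    · intro hlast
      have h3 : ¬ lastc true q = true := by rw [hlast]; simp
      have : ¬ ((tr true (llen l) q).length % 2 = 1) := fun hx => h3 (hpar.mpr hx)
      have hnot : ¬ ((tr true (llen l) q).headD 0 < llen l) := by omega
      simp only [eq_iff_iff]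
      apply decide_eq_true
      constructor
      · intro hx; exact absurd hx hnot
      · intro hx; exact absurd hx this

theorem ccol_append {m : ℕ} {o : List ℕ} (ho : o ≠ []) (i : ℕ) :
    ccol m (o ++ [i]) = ! ccol m o := by
  cases o with
  | nil => exact absurd rfl ho
  | cons a t =>
    have hlen : (a :: (t ++ [i])).length = t.length + 2 := by simp
    have hlen2 : (a :: t).length = t.length + 1 := by simp
    simp only [ccol, List.cons_append, hlen, hlen2, List.headD_cons]
    rcases Nat.mod_two_eq_zero_or_one t.length with hp | hp
    · have e1 : (t.length + 2) % 2 = 0 := by omega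
      have e2 : (t.length + 1) % 2 = 1 := by omega
      by_cases h : a < m <;> simp [h, e1, e2]
    · have e1 : (t.length + 2) % 2 = 1 := by omega
      have e2 : (t.length + 1) % 2 = 0 := by omega
      by_cases h : a < m <;> simp [h, e1, e2]

theorem ne_nil_of_getLast? {α : Type*} {p : List α} {b : α} (h : p.getLast? = some b) :
    p ≠ [] := by
  cases p <;> simp_all

theorem getLast?_or {p : List Bool} (h : p ≠ []) :
    p.getLast? = some false ∨ p.getLast? = some true := by
  cases p with
  | nil => exact absurd rfl h
  | cons c q =>
    rw [lastc_eq]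
    cases lastc c q
    · exact Or.inl rfl
    · exact Or.inr rfl

theorem mem_leftVertices {B : BT} {p : List Bool} :
    p ∈ B.leftVertices ↔ p ∈ B.paths ∧ p.getLast? = some false := by
  simp [BT.leftVertices, List.mem_toFinset]

theorem mem_rightVertices {B : BT} {p : List Bool} :
    p ∈ B.rightVertices ↔ p ∈ B.paths ∧ p.getLast? = some true := by
  simp [BT.rightVertices, List.mem_toFinset]

theorem ccol_singleton {m i : ℕ} : ccol m [i] = true ↔ i < m := by
  simp [ccol]

theorem headD_append {u : List ℕ} (h : u ≠ []) (i : ℕ) :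
    (u ++ [i]).headD 0 = u.headD 0 := by
  cases u <;> simp_all

/-- the map from nonempty binary-tree positions to non-root ordered-tree positions. -/
def phiMap (l r : BT) (p : {p : List Bool // p ∈ (BT.node l r).paths ∧ p ≠ []}) :
    {o : List ℕ // o ∈ (Phi l r).nonRoot} :=
  ⟨pm (llen l) p.1, mem_nonRoot_phi.mpr ⟨p.1, p.2, rfl⟩⟩

theorem phiMap_bijective (l r : BT) : Function.Bijective (phiMap l r) := by
  constructor
  · rintro ⟨p, hp, hnp⟩ ⟨p', hp', hnp'⟩ h
    exact Subtype.ext (pm_inj hp hp' (congrArg Subtype.val h) hnp hnp')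
  · rintro ⟨o, ho⟩
    obtain ⟨p, hp, rfl⟩ := mem_nonRoot_phi.mp ho
    exact ⟨⟨p, hp⟩, rfl⟩

/-- the equivalence between nonempty binary-tree positions and non-root positions of the
corresponding ordered tree. -/
noncomputable def eqv (l r : BT) :
    {p : List Bool // p ∈ (BT.node l r).paths ∧ p ≠ []} ≃
      {o : List ℕ // o ∈ (Phi l r).nonRoot} :=
  Equiv.ofBijective _ (phiMap_bijective l r)

theorem eqv_apply (l r : BT) (p) : ((eqv l r) p).1 = pm (llen l) p.1 := rfl

theorem eqv_symm_pm (l r : BT) (v) : pm (llen l) ((eqv l r).symm v).1 = v.1 := by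
  have := (eqv l r).apply_symm_apply v
  exact congrArg Subtype.val this

/-- the label function transported from a NAT. -/
def labP (l r : BT) (N : NAT (BT.node l r)) (p : List Bool) : ℕ :=
  if h : p ∈ (BT.node l r).leftVertices then (N.fL ⟨p, h⟩ : ℕ) + 1
  else if h' : p ∈ (BT.node l r).rightVertices then (N.fR ⟨p, h'⟩ : ℕ) + 1
  else 0

/-- translation of the ordered-tree ancestry/sibling relations into strict binary-tree
ancestry. -/
theorem pm_rel_to_prefix {l r : BT} {p p' : List Bool}
    (hp : p ∈ (BT.node l r).paths) (hp' : p' ∈ (BT.node l r).paths)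
    (hnep : p ≠ []) (hnep' : p' ≠ [])
    (hcol : ccol (llen l) (pm (llen l) p) = ccol (llen l) (pm (llen l) p'))
    (hrel : (pm (llen l) p <+: pm (llen l) p' ∧ pm (llen l) p ≠ pm (llen l) p') ∨
      (∃ u i j, pm (llen l) p = u ++ [i] ∧ pm (llen l) p' = u ++ [j] ∧ i < j)) :
    p <+: p' ∧ p ≠ p' := by
  rcases mem_paths_node.mp hp with rfl | ⟨q, hq, rfl⟩ | ⟨q, hq, rfl⟩
  · exact absurd rfl hnep
  · rcases mem_paths_node.mp hp' with rfl | ⟨q', hq', rfl⟩ | ⟨q', hq', rfl⟩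
    · exact absurd rfl hnep'
    · -- both start with a left step
      simp only [pm] at hcol hrel
      have hne2 : false :: q ≠ false :: q' → True := fun _ => trivial
      rcases hrel with ⟨hpre, hne⟩ | ⟨u, i, j, h1, h2, hij⟩
      · have hq2 := tr_prefix hpre
        refine ⟨List.cons_prefix_cons.mpr ⟨rfl, hq2⟩, ?_⟩
        intro hcontra
        exact hne (by rw [List.cons.injEq] at hcontra; rw [hcontra.2])
      · obtain ⟨c, a, ha⟩ := tr_sibling h1 h2 hij
        subst ha
        refine ⟨⟨List.replicate (a+1) c, by simp⟩, ?_⟩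
        intro hcontra
        have := congrArg List.length hcontra
        simp at this
    · -- left vs right : impossible by colour or prefix-head
      exfalso
      simp only [pm] at hcol hrel
      have hlt : run false q < llen l := run_lt_llen hq
      obtain ⟨t, ht⟩ := tr_cons false 0 q
      obtain ⟨t', ht'⟩ := tr_cons true (llen l) q'
      rcases hrel with ⟨hpre, hne⟩ | ⟨u, i, j, h1, h2, hij⟩
      · rw [ht, ht'] at hpre
        have := (List.cons_prefix_cons.mp hpre).1
        omega
      · cases u with
        | nil =>
          -- colours differ
          simp only [List.nil_append] at h1 h2
          obtain ⟨j1, hj1, hi1⟩ := tr_eq_singleton h1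
          obtain ⟨j2, hj2, hi2⟩ := tr_eq_singleton h2
          rw [h1, h2] at hcol
          have hilt : i < llen l := by
            subst hj1
            have := replicate_mem_llen (bt_prefix_closed (List.prefix_refl _) hq)
            omega
          have c1 : ccol (llen l) [i] = true := ccol_singleton.mpr hilt
          have c2 : ccol (llen l) [j] = false := by
            have : ¬ (j < llen l) := by omega
            cases hc : ccol (llen l) [j]
            · rfl
            · exact absurd (ccol_singleton.mp hc) this
          rw [c1, c2] at hcol
          simp at hcol
        | cons a u =>
          rw [ht] at h1
          rw [ht'] at h2
          simp only [List.cons_append] at h1 h2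
          rw [List.cons_eq_cons] at h1 h2
          omega
  · rcases mem_paths_node.mp hp' with rfl | ⟨q', hq', rfl⟩ | ⟨q', hq', rfl⟩
    · exact absurd rfl hnep'
    · -- right vs left : impossible
      exfalso
      simp only [pm] at hcol hrel
      have hlt : run false q' < llen l := run_lt_llen hq'
      obtain ⟨t, ht⟩ := tr_cons true (llen l) q
      obtain ⟨t', ht'⟩ := tr_cons false 0 q'
      rcases hrel with ⟨hpre, hne⟩ | ⟨u, i, j, h1, h2, hij⟩
      · rw [ht, ht'] at hpre
        have := (List.cons_prefix_cons.mp hpre).1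
        omega
      · cases u with
        | nil =>
          simp only [List.nil_append] at h1 h2
          obtain ⟨j1, hj1, hi1⟩ := tr_eq_singleton h1
          obtain ⟨j2, hj2, hi2⟩ := tr_eq_singleton h2
          rw [h1, h2] at hcol
          have hjlt : j < llen l := by
            subst hj2
            have := replicate_mem_llen (bt_prefix_closed (List.prefix_refl _) hq')
            omega
          have c2 : ccol (llen l) [j] = true := ccol_singleton.mpr hjlt
          have c1 : ccol (llen l) [i] = false := by
            have : ¬ (i < llen l) := by omega
            cases hc : ccol (llen l) [i]
            · rfl
            · exact absurd (ccol_singleton.mp hc) this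
          rw [c1, c2] at hcol
          simp at hcol
        | cons a u =>
          rw [ht] at h1
          rw [ht'] at h2
          simp only [List.cons_append] at h1 h2
          rw [List.cons_eq_cons] at h1 h2
          omega
    · -- both start with a right step
      simp only [pm] at hcol hrel
      rcases hrel with ⟨hpre, hne⟩ | ⟨u, i, j, h1, h2, hij⟩
      · have hq2 := tr_prefix hpre
        refine ⟨List.cons_prefix_cons.mpr ⟨rfl, hq2⟩, ?_⟩
        intro hcontra
        exact hne (by rw [List.cons.injEq] at hcontra; rw [hcontra.2])
      · obtain ⟨c, a, ha⟩ := tr_sibling h1 h2 hij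
        subst ha
        refine ⟨⟨List.replicate (a+1) c, by simp⟩, ?_⟩
        intro hcontra
        have := congrArg List.length hcontra
        simp at this

/-- strict decrease of transported labels along strict binary-tree ancestry
(same last letter). -/
theorem labP_strict {l r : BT} (N : NAT (BT.node l r)) {p p' : List Bool}
    (hp : p ∈ (BT.node l r).paths) (hp' : p' ∈ (BT.node l r).paths)
    (hlast : p.getLast? = p'.getLast?) (hne : p ≠ []) (hne' : p' ≠ [])
    (hpre : p <+: p') (hneq : p ≠ p') :
    labP l r N p' < labP l r N p := by
  rcases getLast?_or hne with hb | hb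
  · have hbl : p ∈ (BT.node l r).leftVertices := mem_leftVertices.mpr ⟨hp, hb⟩
    have hbl' : p' ∈ (BT.node l r).leftVertices :=
      mem_leftVertices.mpr ⟨hp', by rw [← hlast]; exact hb⟩
    have := N.ancL ⟨p, hbl⟩ ⟨p', hbl'⟩ hpre (by simp [Subtype.ext_iff]; exact hneq)
    simp only [labP, dif_pos hbl, dif_pos hbl']
    omega
  · have hbr : p ∈ (BT.node l r).rightVertices := mem_rightVertices.mpr ⟨hp, hb⟩
    have hbr' : p' ∈ (BT.node l r).rightVertices :=
      mem_rightVertices.mpr ⟨hp', by rw [← hlast]; exact hb⟩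
    have hnotl : ¬ p ∈ (BT.node l r).leftVertices := by
      rw [mem_leftVertices]
      rintro ⟨-, h2⟩
      rw [hb] at h2
      simp at h2
    have hnotl' : ¬ p' ∈ (BT.node l r).leftVertices := by
      rw [mem_leftVertices]
      rintro ⟨-, h2⟩
      rw [← hlast, hb] at h2
      simp at h2
    have := N.ancR ⟨p, hbr⟩ ⟨p', hbr'⟩ hpre (by simp [Subtype.ext_iff]; exact hneq)
    simp only [labP, dif_neg hnotl, dif_neg hnotl', dif_pos hbr, dif_pos hbr']
    omega

theorem ccol_pm_false {l r : BT} {p : List Bool}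
    (hp : p ∈ (BT.node l r).paths) (hne : p ≠ []) :
    ccol (llen l) (pm (llen l) p) = false ↔ p.getLast? = some true := by
  have h := ccol_pm hp hne
  constructor
  · intro hf
    rcases getLast?_or hne with h1 | h1
    · rw [h.mpr h1] at hf; simp at hf
    · exact h1
  · intro ht
    cases hc : ccol (llen l) (pm (llen l) p)
    · rfl
    · rw [h.mp hc] at ht; simp at ht

/-- the red vertices correspond to the left children. -/
noncomputable def redEquiv (l r : BT) :
    {v : {o : List ℕ // o ∈ (Phi l r).nonRoot} // ccol (llen l) v.1 = true} ≃
      {p : List Bool // p ∈ (BT.node l r).leftVertices} where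
  toFun v := ⟨((eqv l r).symm v.1).1, by
    have h1 := ((eqv l r).symm v.1).2
    have h2 : ccol (llen l) (pm (llen l) ((eqv l r).symm v.1).1) = true := by
      rw [eqv_symm_pm]; exact v.2
    exact mem_leftVertices.mpr ⟨h1.1, (ccol_pm h1.1 h1.2).mp h2⟩⟩
  invFun p := ⟨(eqv l r) ⟨p.1, (mem_leftVertices.mp p.2).1,
      ne_nil_of_getLast? (mem_leftVertices.mp p.2).2⟩, by
    show ccol _ ((eqv l r) _).1 = true
    rw [eqv_apply]
    exact (ccol_pm (mem_leftVertices.mp p.2).1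
      (ne_nil_of_getLast? (mem_leftVertices.mp p.2).2)).mpr (mem_leftVertices.mp p.2).2⟩
  left_inv v := by
    apply Subtype.ext
    show (eqv l r) ⟨((eqv l r).symm v.1).1, _⟩ = v.1
    have heq : (⟨((eqv l r).symm v.1).1, _⟩ :
        {p : List Bool // p ∈ (BT.node l r).paths ∧ p ≠ []}) = (eqv l r).symm v.1 :=
      Subtype.ext rfl
    rw [heq, Equiv.apply_symm_apply]
  right_inv p := by
    apply Subtype.ext
    show ((eqv l r).symm ((eqv l r) _)).1 = p.1
    rw [Equiv.symm_apply_apply]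

/-- the blue vertices correspond to the right children. -/
noncomputable def blueEquiv (l r : BT) :
    {v : {o : List ℕ // o ∈ (Phi l r).nonRoot} // ccol (llen l) v.1 = false} ≃
      {p : List Bool // p ∈ (BT.node l r).rightVertices} where
  toFun v := ⟨((eqv l r).symm v.1).1, by
    have h1 := ((eqv l r).symm v.1).2
    have h2 : ccol (llen l) (pm (llen l) ((eqv l r).symm v.1).1) = false := by
      rw [eqv_symm_pm]; exact v.2
    exact mem_rightVertices.mpr ⟨h1.1, (ccol_pm_false h1.1 h1.2).mp h2⟩⟩
  invFun p := ⟨(eqv l r) ⟨p.1, (mem_rightVertices.mp p.2).1,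
      ne_nil_of_getLast? (mem_rightVertices.mp p.2).2⟩, by
    show ccol _ ((eqv l r) _).1 = false
    rw [eqv_apply]
    exact (ccol_pm_false (mem_rightVertices.mp p.2).1
      (ne_nil_of_getLast? (mem_rightVertices.mp p.2).2)).mpr (mem_rightVertices.mp p.2).2⟩
  left_inv v := by
    apply Subtype.ext
    show (eqv l r) ⟨((eqv l r).symm v.1).1, _⟩ = v.1
    have heq : (⟨((eqv l r).symm v.1).1, _⟩ :
        {p : List Bool // p ∈ (BT.node l r).paths ∧ p ≠ []}) = (eqv l r).symm v.1 :=
      Subtype.ext rfl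
    rw [heq, Equiv.apply_symm_apply]
  right_inv p := by
    apply Subtype.ext
    show ((eqv l r).symm ((eqv l r) _)).1 = p.1
    rw [Equiv.symm_apply_apply]

theorem ncard_red (l r : BT) :
    Set.ncard {v : {o : List ℕ // o ∈ (Phi l r).nonRoot} | ccol (llen l) v.1 = true}
      = (BT.node l r).leftVertices.card := by
  rw [← Nat.card_coe_set_eq, Set.coe_setOf, Nat.card_congr (redEquiv l r),
    Nat.card_eq_fintype_card, Fintype.card_coe]

theorem ncard_blue (l r : BT) :
    Set.ncard {v : {o : List ℕ // o ∈ (Phi l r).nonRoot} | ccol (llen l) v.1 = false}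
      = (BT.node l r).rightVertices.card := by
  rw [← Nat.card_coe_set_eq, Set.coe_setOf, Nat.card_congr (blueEquiv l r),
    Nat.card_eq_fintype_card, Fintype.card_coe]

/-- The forward construction : a NOTL structure on `Phi l r` from a NAT on `node l r`. -/
noncomputable def mkNOTL (l r : BT) (N : NAT (BT.node l r)) : NOTL (Phi l r) where
  colour v := ccol (llen l) v.1
  label v := labP l r N ((eqv l r).symm v).1
  bijRed := by
    have hR := ncard_red l r
    refine ⟨?_, ?_, ?_⟩
    · intro v hv
      simp only [Set.mem_setOf_eq] at hv
      have hp := ((eqv l r).symm v).2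
      have hleft : ((eqv l r).symm v).1 ∈ (BT.node l r).leftVertices :=
        mem_leftVertices.mpr ⟨hp.1, (ccol_pm hp.1 hp.2).mp (by rw [eqv_symm_pm]; exact hv)⟩
      have hlt := (N.fL ⟨((eqv l r).symm v).1, hleft⟩).isLt
      simp only [labP, dif_pos hleft, Set.mem_Icc, hR]
      omega
    · intro v hv w hw heq
      simp only [Set.mem_setOf_eq] at hv hw
      have hpv := ((eqv l r).symm v).2
      have hpw := ((eqv l r).symm w).2
      have hlv : ((eqv l r).symm v).1 ∈ (BT.node l r).leftVertices :=
        mem_leftVertices.mpr ⟨hpv.1, (ccol_pm hpv.1 hpv.2).mp (by rw [eqv_symm_pm]; exact hv)⟩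
      have hlw : ((eqv l r).symm w).1 ∈ (BT.node l r).leftVertices :=
        mem_leftVertices.mpr ⟨hpw.1, (ccol_pm hpw.1 hpw.2).mp (by rw [eqv_symm_pm]; exact hw)⟩
      simp only [labP, dif_pos hlv, dif_pos hlw] at heq
      have hfin : N.fL ⟨((eqv l r).symm v).1, hlv⟩ = N.fL ⟨((eqv l r).symm w).1, hlw⟩ :=
        Fin.ext (by omega)
      have := N.bijL.1 hfin
      have hval := congrArg Subtype.val this
      simp only at hval
      have h2 : (eqv l r).symm v = (eqv l r).symm w := Subtype.ext hval
      have := congrArg (eqv l r) h2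
      simpa using this
    · intro y hy
      simp only [Set.mem_Icc, hR] at hy
      have hc : 0 < (BT.node l r).leftVertices.card := by omega
      obtain ⟨pl, hpl⟩ := N.bijL.2 ⟨y - 1, by omega⟩
      have hmem := pl.2
      have hne : pl.1 ≠ [] := ne_nil_of_getLast? (mem_leftVertices.mp hmem).2
      have hpaths : pl.1 ∈ (BT.node l r).paths := (mem_leftVertices.mp hmem).1
      refine ⟨(eqv l r) ⟨pl.1, hpaths, hne⟩, ?_, ?_⟩
      · show ccol (llen l) ((eqv l r) _).1 = true
        rw [eqv_apply]
        exact (ccol_pm hpaths hne).mpr (mem_leftVertices.mp hmem).2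
      · show labP l r N ((eqv l r).symm ((eqv l r) _)).1 = y
        rw [Equiv.symm_apply_apply]
        simp only [labP, dif_pos hmem]
        rw [show (⟨pl.1, hmem⟩ : {p : List Bool // p ∈ (BT.node l r).leftVertices}) = pl
          from Subtype.ext rfl, hpl]
        simp
        omega
  bijBlue := by
    have hR := ncard_blue l r
    refine ⟨?_, ?_, ?_⟩
    · intro v hv
      simp only [Set.mem_setOf_eq] at hv
      have hp := ((eqv l r).symm v).2
      have hright : ((eqv l r).symm v).1 ∈ (BT.node l r).rightVertices :=
        mem_rightVertices.mpr ⟨hp.1,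
          (ccol_pm_false hp.1 hp.2).mp (by rw [eqv_symm_pm]; exact hv)⟩
      have hnotl : ¬ ((eqv l r).symm v).1 ∈ (BT.node l r).leftVertices := by
        rw [mem_leftVertices]
        rintro ⟨-, h2⟩
        rw [(mem_rightVertices.mp hright).2] at h2
        simp at h2
      have hlt := (N.fR ⟨((eqv l r).symm v).1, hright⟩).isLt
      simp only [labP, dif_neg hnotl, dif_pos hright, Set.mem_Icc, hR]
      omega
    · intro v hv w hw heq
      simp only [Set.mem_setOf_eq] at hv hw
      have hpv := ((eqv l r).symm v).2
      have hpw := ((eqv l r).symm w).2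
      have hlv : ((eqv l r).symm v).1 ∈ (BT.node l r).rightVertices :=
        mem_rightVertices.mpr ⟨hpv.1,
          (ccol_pm_false hpv.1 hpv.2).mp (by rw [eqv_symm_pm]; exact hv)⟩
      have hlw : ((eqv l r).symm w).1 ∈ (BT.node l r).rightVertices :=
        mem_rightVertices.mpr ⟨hpw.1,
          (ccol_pm_false hpw.1 hpw.2).mp (by rw [eqv_symm_pm]; exact hw)⟩
      have hnv : ¬ ((eqv l r).symm v).1 ∈ (BT.node l r).leftVertices := by
        rw [mem_leftVertices]
        rintro ⟨-, h2⟩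
        rw [(mem_rightVertices.mp hlv).2] at h2
        simp at h2
      have hnw : ¬ ((eqv l r).symm w).1 ∈ (BT.node l r).leftVertices := by
        rw [mem_leftVertices]
        rintro ⟨-, h2⟩
        rw [(mem_rightVertices.mp hlw).2] at h2
        simp at h2
      simp only [labP, dif_neg hnv, dif_neg hnw, dif_pos hlv, dif_pos hlw] at heq
      have hfin : N.fR ⟨((eqv l r).symm v).1, hlv⟩ = N.fR ⟨((eqv l r).symm w).1, hlw⟩ :=
        Fin.ext (by omega)
      have := N.bijR.1 hfin
      have hval := congrArg Subtype.val this
      simp only at hval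
      have h2 : (eqv l r).symm v = (eqv l r).symm w := Subtype.ext hval
      have := congrArg (eqv l r) h2
      simpa using this
    · intro y hy
      simp only [Set.mem_Icc, hR] at hy
      obtain ⟨pl, hpl⟩ := N.bijR.2 ⟨y - 1, by omega⟩
      have hmem := pl.2
      have hne : pl.1 ≠ [] := ne_nil_of_getLast? (mem_rightVertices.mp hmem).2
      have hpaths : pl.1 ∈ (BT.node l r).paths := (mem_rightVertices.mp hmem).1
      have hnotl : ¬ pl.1 ∈ (BT.node l r).leftVertices := by
        rw [mem_leftVertices]
        rintro ⟨-, h2⟩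
        rw [(mem_rightVertices.mp hmem).2] at h2
        simp at h2
      refine ⟨(eqv l r) ⟨pl.1, hpaths, hne⟩, ?_, ?_⟩
      · show ccol (llen l) ((eqv l r) _).1 = false
        rw [eqv_apply]
        exact (ccol_pm_false hpaths hne).mpr (mem_rightVertices.mp hmem).2
      · show labP l r N ((eqv l r).symm ((eqv l r) _)).1 = y
        rw [Equiv.symm_apply_apply]
        simp only [labP, dif_neg hnotl, dif_pos hmem]
        rw [show (⟨pl.1, hmem⟩ : {p : List Bool // p ∈ (BT.node l r).rightVertices}) = pl
          from Subtype.ext rfl, hpl]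
        simp
        omega
  rootOrder := by
    intro i j hi hj hci hcj
    have hci' : ccol (llen l) [i] = true := hci
    have hcj' : ccol (llen l) [j] = false := hcj
    have h1 : i < llen l := ccol_singleton.mp hci'
    have h2 : ¬ j < llen l := by
      intro hx
      rw [ccol_singleton.mpr hx] at hcj'
      simp at hcj'
    omega
  alternating := by
    intro v w ⟨i, hw⟩
    show ccol (llen l) w.1 = ! ccol (llen l) v.1
    rw [hw]
    exact ccol_append (mem_nonRoot.mp v.2).2 i
  decreasing := by
    intro v w hcol hrel
    have hpv := ((eqv l r).symm v).2
    have hpw := ((eqv l r).symm w).2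
    have hv1 : pm (llen l) ((eqv l r).symm v).1 = v.1 := eqv_symm_pm l r v
    have hw1 : pm (llen l) ((eqv l r).symm w).1 = w.1 := eqv_symm_pm l r w
    have hcol' : ccol (llen l) (pm (llen l) ((eqv l r).symm v).1)
        = ccol (llen l) (pm (llen l) ((eqv l r).symm w).1) := by
      rw [hv1, hw1]; exact hcol
    have hrel' : (pm (llen l) ((eqv l r).symm v).1 <+: pm (llen l) ((eqv l r).symm w).1 ∧
        pm (llen l) ((eqv l r).symm v).1 ≠ pm (llen l) ((eqv l r).symm w).1) ∨
        (∃ u i j, pm (llen l) ((eqv l r).symm v).1 = u ++ [i] ∧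
          pm (llen l) ((eqv l r).symm w).1 = u ++ [j] ∧ i < j) := by
      rw [hv1, hw1]
      rcases hrel with ⟨h1, h2⟩ | h
      · exact Or.inl ⟨h1, fun hx => h2 (Subtype.ext hx)⟩
      · exact Or.inr h
    obtain ⟨hpre, hneq⟩ := pm_rel_to_prefix hpv.1 hpw.1 hpv.2 hpw.2 hcol' hrel'
    have hlast : ((eqv l r).symm v).1.getLast? = ((eqv l r).symm w).1.getLast? := by
      rcases getLast?_or hpv.2 with h1 | h1 <;> rcases getLast?_or hpw.2 with h2 | h2
      · rw [h1, h2]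
      · exfalso
        rw [(ccol_pm hpv.1 hpv.2).mpr h1, ((ccol_pm_false hpw.1 hpw.2).mpr h2)] at hcol'
        simp at hcol'
      · exfalso
        rw [(ccol_pm hpw.1 hpw.2).mpr h2, ((ccol_pm_false hpv.1 hpv.2).mpr h1)] at hcol'
        simp at hcol'
      · rw [h1, h2]
    exact labP_strict N hpv.1 hpw.1 hlast hpv.2 hpw.2 hpre hneq

theorem getLast?_rep' {b : Bool} : ∀ (a : ℕ), (List.replicate (a+1) b).getLast? = some b := by
  intro a
  induction a with
  | zero => rfl
  | succ a ih =>
    rw [show List.replicate (a+1+1) b = b :: List.replicate (a+1) b from List.replicate_succ ..]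
    rw [show List.replicate (a+1) b = b :: List.replicate a b from
      List.replicate_succ ..] at ih ⊢
    rw [List.getLast?_cons_cons]
    exact ih

theorem getLast?_rep {b : Bool} {a : ℕ} (h : 1 ≤ a) :
    (List.replicate a b).getLast? = some b := by
  cases a with
  | zero => omega
  | succ a => exact getLast?_rep' a

theorem getLast?_append_rep {y : List Bool} {b : Bool} {a : ℕ} (h : 1 ≤ a) :
    (y ++ List.replicate a b).getLast? = some b := by
  rw [List.getLast?_append_of_ne_nil y (by simp; omega)]
  exact getLast?_rep h

theorem run_decomp (b : Bool) (t : List Bool) :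
    t = List.replicate (run b t) b ++ t.drop (run b t) ∧
      (t.drop (run b t) = [] ∨ ∃ s, t.drop (run b t) = (!b) :: s) := by
  induction t with
  | nil => simp [run]
  | cons c t ih =>
    by_cases hc : c = b
    · subst hc
      rw [run, if_pos rfl]
      constructor
      · simp only [List.replicate_succ, List.cons_append, List.drop_succ_cons]
        rw [← ih.1]
      · simp only [List.drop_succ_cons]
        exact ih.2
    · rw [run, if_neg hc]
      constructor
      · simp
      · exact Or.inr ⟨t, by rw [bool_eq_not_of_ne hc]; simp⟩

theorem replicate_mem_of_lt_llen {B : BT} {j : ℕ} (h : j < llen B) :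
    List.replicate j false ∈ B.paths := by
  induction B generalizing j with
  | nil => simp [llen] at h
  | node a b iha ihb =>
    cases j with
    | zero => exact mem_paths_node.mpr (Or.inl rfl)
    | succ j =>
      rw [List.replicate_succ]
      exact mem_paths_node.mpr (Or.inr (Or.inl ⟨_, iha (by simp [llen] at h; omega), rfl⟩))

theorem replicate_mem_of_lt_rlen {B : BT} {j : ℕ} (h : j < rlen B) :
    List.replicate j true ∈ B.paths := by
  induction B generalizing j with
  | nil => simp [rlen] at h
  | node a b iha ihb =>
    cases j with
    | zero => exact mem_paths_node.mpr (Or.inl rfl)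
    | succ j =>
      rw [List.replicate_succ]
      exact mem_paths_node.mpr (Or.inr (Or.inr ⟨_, ihb (by simp [rlen] at h; omega), rfl⟩))

theorem singleton_mem_phi {l r : BT} {i : ℕ} :
    [i] ∈ (Phi l r).nonRoot ↔ i < llen l + rlen r := by
  rw [mem_nonRoot_phi]
  constructor
  · rintro ⟨p, ⟨hp, hne⟩, he⟩
    rcases mem_paths_node.mp hp with rfl | ⟨q, hq, rfl⟩ | ⟨q, hq, rfl⟩
    · exact absurd rfl hne
    · simp only [pm] at he
      obtain ⟨j, hj, hij⟩ := tr_eq_singleton he.symm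
      subst hj
      have := replicate_mem_llen (bt_prefix_closed (List.prefix_refl _) hq)
      omega
    · simp only [pm] at he
      obtain ⟨j, hj, hij⟩ := tr_eq_singleton he.symm
      subst hj
      have := replicate_mem_rlen (bt_prefix_closed (List.prefix_refl _) hq)
      omega
  · intro hi
    by_cases h : i < llen l
    · refine ⟨false :: List.replicate i false,
        ⟨mem_paths_node.mpr (Or.inr (Or.inl ⟨_, replicate_mem_of_lt_llen h, rfl⟩)), by simp⟩, ?_⟩
      simp [pm, tr_replicate]
    · refine ⟨true :: List.replicate (i - llen l) true,
        ⟨mem_paths_node.mpr (Or.inr (Or.inr ⟨_, replicate_mem_of_lt_rlen (by omega), rfl⟩)),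
          by simp⟩, ?_⟩
      simp [pm, tr_replicate]
      omega

theorem pm_cons (m : ℕ) {p : List Bool} (hne : p ≠ []) :
    ∃ d q k0, p = d :: q ∧ (∀ s, pm m (p ++ s) = tr d k0 (q ++ s)) ∧ pm m p = tr d k0 q := by
  cases p with
  | nil => exact absurd rfl hne
  | cons c q =>
    cases c
    · exact ⟨false, q, 0, rfl, fun s => rfl, rfl⟩
    · exact ⟨true, q, m, rfl, fun s => rfl, rfl⟩

theorem ccol_eq_of_last {l r : BT} {p p' : List Bool}
    (hp : p ∈ (BT.node l r).paths) (hp' : p' ∈ (BT.node l r).paths)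
    (hne : p ≠ []) (hne' : p' ≠ []) (h : p.getLast? = p'.getLast?) :
    ccol (llen l) (pm (llen l) p) = ccol (llen l) (pm (llen l) p') := by
  rcases getLast?_or hne with hb | hb
  · rw [(ccol_pm hp hne).mpr hb, (ccol_pm hp' hne').mpr (by rw [← h]; exact hb)]
  · rw [(ccol_pm_false hp hne).mpr hb, (ccol_pm_false hp' hne').mpr (by rw [← h]; exact hb)]

/-- the reverse key lemma : the NOTL decreasing property implies strict decrease of labels
along same-side strict binary-tree ancestry. -/
theorem rev_key (l r : BT) (L : NOTL (Phi l r))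
    (hcol : ∀ v, L.colour v = ccol (llen l) v.1)
    {p p' : List Bool} (hp : p ∈ (BT.node l r).paths) (hp' : p' ∈ (BT.node l r).paths)
    (hne : p ≠ []) (hne' : p' ≠ []) (hlast : p.getLast? = p'.getLast?)
    (hpre : p <+: p') (hneq : p ≠ p') :
    L.label ((eqv l r) ⟨p', hp', hne'⟩) < L.label ((eqv l r) ⟨p, hp, hne⟩) := by
  obtain ⟨t, rfl⟩ := hpre
  have htne : t ≠ [] := by rintro rfl; simp at hneq
  obtain ⟨b, hb⟩ : ∃ b, p.getLast? = some b := by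
    rcases getLast?_or hne with h | h
    exacts [⟨_, h⟩, ⟨_, h⟩]
  have hbt : t.getLast? = some b := by
    rw [← List.getLast?_append_of_ne_nil p htne, ← hlast]
    exact hb
  obtain ⟨d, q, k0, hpd, hpm_app, hpm⟩ := pm_cons (llen l) hne
  have hlq : lastc d q = b := by
    rw [hpd, lastc_eq] at hb
    exact Option.some.inj hb
  obtain ⟨hdec, hdrop⟩ := run_decomp b t
  set a := run b t with ha
  -- colour equality between p and p ++ t
  have hcoleq : L.colour ((eqv l r) ⟨p, hp, hne⟩) = L.colour ((eqv l r) ⟨p ++ t, hp', hne'⟩) := by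
    rw [hcol, hcol]
    exact ccol_eq_of_last hp hp' hne hne' hlast
  rcases hdrop with hdrop | ⟨s, hdrop⟩
  · -- t is a single run : sibling relation
    have ht : t = List.replicate a b := by rw [hdec, hdrop, List.append_nil]
    have ha1 : 1 ≤ a := by
      rcases Nat.eq_zero_or_pos a with h0 | h0
      · rw [h0] at ht; simp at ht; exact absurd ht htne
      · exact h0
    obtain ⟨u, x0, h1, h2⟩ := tr_append_run hlq k0 a
    refine L.decreasing _ _ hcoleq (Or.inr ⟨u, x0, x0 + a, ?_, ?_, by omega⟩)
    · show pm (llen l) p = u ++ [x0]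
      rw [hpm, h1]
    · show pm (llen l) (p ++ t) = u ++ [x0 + a]
      rw [ht, hpm_app, h2]
  · -- t = replicate a b ++ (!b) :: s
    have hps : p ++ t = (p ++ List.replicate a b) ++ (!b) :: s := by
      rw [List.append_assoc, ← hdrop, ← hdec]
    have hxpre : (p ++ List.replicate a b) <+: (p ++ t) := ⟨(!b) :: s, hps.symm⟩
    have hx : (p ++ List.replicate a b) ∈ (BT.node l r).paths := bt_prefix_closed hxpre hp'
    have hxne : (p ++ List.replicate a b) ≠ [] := by simp [hne]
    have hxlast : (p ++ List.replicate a b).getLast? = some b := by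
      rcases Nat.eq_zero_or_pos a with h0 | h0
      · simp [h0, hb]
      · exact getLast?_append_rep h0
    have hlqx : lastc d (q ++ List.replicate a b) = b := by
      have : (p ++ List.replicate a b) = d :: (q ++ List.replicate a b) := by
        rw [hpd]; simp
      rw [this, lastc_eq] at hxlast
      exact Option.some.inj hxlast
    -- step 1 : p ++ t is a strict descendant of x := p ++ replicate a b
    have hflip : pm (llen l) (p ++ t) = pm (llen l) (p ++ List.replicate a b) ++ tr (!b) 0 s := by
      rw [hps, show (p ++ List.replicate a b) ++ (!b) :: s
          = p ++ (List.replicate a b ++ (!b) :: s) from by rw [List.append_assoc],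
        hpm_app, hpm_app, ← List.append_assoc, tr_append_flip hlqx]
    have hstep1 : L.label ((eqv l r) ⟨p ++ t, hp', hne'⟩)
        < L.label ((eqv l r) ⟨p ++ List.replicate a b, hx, hxne⟩) := by
      refine L.decreasing _ _ ?_ (Or.inl ⟨?_, ?_⟩)
      · rw [hcol, hcol]
        exact ccol_eq_of_last hx hp' hxne hne' (by rw [hxlast, ← hlast, hb])
      · show pm (llen l) (p ++ List.replicate a b) <+: pm (llen l) (p ++ t)
        rw [hflip]
        exact ⟨tr (!b) 0 s, rfl⟩
      · intro hcontra
        have : pm (llen l) (p ++ List.replicate a b) = pm (llen l) (p ++ t) :=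
          congrArg Subtype.val hcontra
        rw [hflip] at this
        have hlen := congrArg List.length this
        rw [List.length_append] at hlen
        have h5 : (tr (!b) 0 s).length = 0 := by omega
        exact tr_ne_nil _ _ _ (List.length_eq_zero_iff.mp h5)
    rcases Nat.eq_zero_or_pos a with h0 | h0
    · -- x = p
      have hxp : p ++ List.replicate a b = p := by simp [h0]
      calc L.label ((eqv l r) ⟨p ++ t, hp', hne'⟩)
          < L.label ((eqv l r) ⟨p ++ List.replicate a b, hx, hxne⟩) := hstep1
        _ = L.label ((eqv l r) ⟨p, hp, hne⟩) := by
            have heq : (⟨p ++ List.replicate a b, hx, hxne⟩ :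
                {p : List Bool // p ∈ (BT.node l r).paths ∧ p ≠ []}) = ⟨p, hp, hne⟩ :=
              Subtype.ext hxp
            rw [heq]
    · -- step 2 : x is a later sibling of p
      obtain ⟨u, x0, h1, h2⟩ := tr_append_run hlq k0 a
      have hstep2 : L.label ((eqv l r) ⟨p ++ List.replicate a b, hx, hxne⟩)
          < L.label ((eqv l r) ⟨p, hp, hne⟩) := by
        refine L.decreasing _ _ ?_ (Or.inr ⟨u, x0, x0 + a, ?_, ?_, by omega⟩)
        · rw [hcol, hcol]
          exact ccol_eq_of_last hp hx hne hxne (by rw [hxlast, hb])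
        · show pm (llen l) p = u ++ [x0]
          rw [hpm, h1]
        · show pm (llen l) (p ++ List.replicate a b) = u ++ [x0 + a]
          rw [hpm_app, h2]
      omega

theorem block_decomp : ∀ (p : List Bool), p ≠ [] → ∀ b, p.getLast? = some b →
    ∃ a, 1 ≤ a ∧ (p = List.replicate a b ∨
      ∃ y, y ≠ [] ∧ y.getLast? = some (!b) ∧ p = y ++ List.replicate a b) := by
  intro p
  induction p with
  | nil => simp
  | cons c q ih =>
    intro _ b hb
    cases q with
    | nil =>
      have hcb : c = b := by simpa using hb
      subst hcb
      exact ⟨1, le_refl 1, Or.inl rfl⟩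
    | cons c' q' =>
      have hq : (c' :: q').getLast? = some b := by
        rw [← List.getLast?_cons_cons (a := c)]
        exact hb
      obtain ⟨a, ha1, hcase⟩ := ih (by simp) b hq
      rcases hcase with hrep | ⟨y, hyne, hylast, hyeq⟩
      · by_cases hc : c = b
        · subst hc
          refine ⟨a + 1, by omega, Or.inl ?_⟩
          rw [List.replicate_succ, ← hrep]
        · refine ⟨a, ha1, Or.inr ⟨[c], by simp, ?_, ?_⟩⟩
          · simp [bool_eq_not_of_ne hc]
          · rw [← hrep]; rfl
      · refine ⟨a, ha1, Or.inr ⟨c :: y, by simp, ?_, ?_⟩⟩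
        · rw [show c :: y = [c] ++ y from rfl, List.getLast?_append_of_ne_nil [c] hyne]
          exact hylast
        · rw [hyeq]; rfl

theorem colour_canonical (l r : BT) (L : NOTL (Phi l r))
    (hroot : ∀ i (hi : [i] ∈ (Phi l r).nonRoot), (L.colour ⟨[i], hi⟩ = true ↔ i < llen l)) :
    ∀ v, L.colour v = ccol (llen l) v.1 := by
  suffices H : ∀ n (v : {o : List ℕ // o ∈ (Phi l r).nonRoot}), v.1.length ≤ n →
      L.colour v = ccol (llen l) v.1 by
    exact fun v => H v.1.length v le_rfl
  intro n
  induction n with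
  | zero =>
    intro v hv
    exact absurd (List.length_eq_zero_iff.mp (Nat.le_zero.mp hv)) (mem_nonRoot.mp v.2).2
  | succ n ihn =>
    intro v hv
    obtain ⟨p, ⟨hp, hne⟩, hvp⟩ := mem_nonRoot_phi.mp v.2
    obtain ⟨b, hb⟩ : ∃ b, p.getLast? = some b := by
      rcases getLast?_or hne with h | h
      exacts [⟨_, h⟩, ⟨_, h⟩]
    obtain ⟨a, ha1, hcase⟩ := block_decomp p hne b hb
    obtain ⟨a', rfl⟩ : ∃ a', a = a' + 1 := ⟨a - 1, by omega⟩
    rcases hcase with hrep | ⟨y, hyne, hylast, hyeq⟩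
    · -- root child
      cases b
      · have hpm : pm (llen l) p = [a'] := by
          rw [hrep, List.replicate_succ]
          show tr false 0 (List.replicate a' false) = [a']
          rw [tr_replicate]
          simp
        have hlt : a' < llen l := by
          have := replicate_mem_llen (B := BT.node l r) (by rw [← hrep]; exact hp)
          simp [llen] at this
          omega
        have hv2 : v.1 = [a'] := by rw [hvp, hpm]
        have hmem : [a'] ∈ (Phi l r).nonRoot := hv2 ▸ v.2
        have hveq : v = ⟨[a'], hmem⟩ := Subtype.ext hv2
        rw [hveq]
        show L.colour ⟨[a'], hmem⟩ = ccol (llen l) [a']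
        rw [(hroot a' hmem).mpr hlt, (ccol_singleton.mpr hlt)]
      · have hpm : pm (llen l) p = [llen l + a'] := by
          rw [hrep, List.replicate_succ]
          show tr true (llen l) (List.replicate a' true) = [llen l + a']
          rw [tr_replicate]
        have hv2 : v.1 = [llen l + a'] := by rw [hvp, hpm]
        have hmem : [llen l + a'] ∈ (Phi l r).nonRoot := hv2 ▸ v.2
        have hveq : v = ⟨[llen l + a'], hmem⟩ := Subtype.ext hv2
        have hnlt : ¬ (llen l + a' < llen l) := by omega
        rw [hveq]
        show L.colour ⟨[llen l + a'], hmem⟩ = ccol (llen l) [llen l + a']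
        have hcf : L.colour ⟨[llen l + a'], hmem⟩ = false := by
          cases hcc : L.colour ⟨[llen l + a'], hmem⟩
          · rfl
          · exact absurd ((hroot _ hmem).mp hcc) hnlt
        have hccf : ccol (llen l) [llen l + a'] = false := by
          cases hcc : ccol (llen l) [llen l + a']
          · rfl
          · exact absurd (ccol_singleton.mp hcc) hnlt
        rw [hcf, hccf]
    · -- deeper vertex
      have hy : y ∈ (BT.node l r).paths := bt_prefix_closed ⟨List.replicate (a'+1) b, hyeq.symm⟩ hp
      obtain ⟨d, q0, k0, hyd, hym_app, hym⟩ := pm_cons (llen l) hyne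
      have hlq : lastc d q0 = !b := by
        rw [hyd, lastc_eq] at hylast
        exact Option.some.inj hylast
      have hpm : pm (llen l) p = pm (llen l) y ++ [a'] := by
        calc pm (llen l) p = tr d k0 (q0 ++ List.replicate (a'+1) b) := by
              rw [hyeq]; exact hym_app _
          _ = tr d k0 (q0 ++ (!(!b)) :: List.replicate a' b) := by
              rw [Bool.not_not, List.replicate_succ]
          _ = tr d k0 q0 ++ tr (!(!b)) 0 (List.replicate a' b) := tr_append_flip hlq k0 _
          _ = pm (llen l) y ++ [a'] := by
              rw [← hym, Bool.not_not, tr_replicate]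
              simp
      have hymem : pm (llen l) y ∈ (Phi l r).nonRoot := mem_nonRoot_phi.mpr ⟨y, ⟨hy, hyne⟩, rfl⟩
      have halt := L.alternating ⟨pm (llen l) y, hymem⟩ v
        ⟨a', show v.1 = pm (llen l) y ++ [a'] from by rw [hvp, hpm]⟩
      have hylen : (pm (llen l) y).length ≤ n := by
        have h1 : v.1.length = (pm (llen l) y).length + 1 := by rw [hvp, hpm]; simp
        omega
      have hihy := ihn ⟨pm (llen l) y, hymem⟩ hylen
      have hpmyne : pm (llen l) y ≠ [] := by
        rw [hym]
        exact tr_ne_nil _ _ _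
      have hcc : ccol (llen l) v.1 = ! ccol (llen l) (pm (llen l) y) := by
        rw [hvp, hpm]
        exact ccol_append hpmyne a'
      rw [halt, hcc, hihy]

theorem lv_mem {l r : BT} (p : {p : List Bool // p ∈ (BT.node l r).leftVertices}) :
    p.1 ∈ (BT.node l r).paths ∧ p.1 ≠ [] :=
  ⟨(mem_leftVertices.mp p.2).1, ne_nil_of_getLast? (mem_leftVertices.mp p.2).2⟩

theorem rv_mem {l r : BT} (p : {p : List Bool // p ∈ (BT.node l r).rightVertices}) :
    p.1 ∈ (BT.node l r).paths ∧ p.1 ≠ [] :=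
  ⟨(mem_rightVertices.mp p.2).1, ne_nil_of_getLast? (mem_rightVertices.mp p.2).2⟩

section Reverse

variable (l r : BT) (L : NOTL (Phi l r))

theorem red_set_eq (hcol : ∀ v, L.colour v = ccol (llen l) v.1) : {v : {o : List ℕ // o ∈ (Phi l r).nonRoot} | L.colour v = true}
    = {v | ccol (llen l) v.1 = true} :=
  Set.ext fun v => by rw [Set.mem_setOf_eq, Set.mem_setOf_eq, hcol v]

theorem blue_set_eq (hcol : ∀ v, L.colour v = ccol (llen l) v.1) : {v : {o : List ℕ // o ∈ (Phi l r).nonRoot} | L.colour v = false}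
    = {v | ccol (llen l) v.1 = false} :=
  Set.ext fun v => by rw [Set.mem_setOf_eq, Set.mem_setOf_eq, hcol v]

theorem ncard_red' (hcol : ∀ v, L.colour v = ccol (llen l) v.1) : Set.ncard {v : {o : List ℕ // o ∈ (Phi l r).nonRoot} |
    L.colour v = true} = (BT.node l r).leftVertices.card := by
  rw [red_set_eq l r L hcol, ncard_red]

theorem ncard_blue' (hcol : ∀ v, L.colour v = ccol (llen l) v.1) : Set.ncard {v : {o : List ℕ // o ∈ (Phi l r).nonRoot} |
    L.colour v = false} = (BT.node l r).rightVertices.card := by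
  rw [blue_set_eq l r L hcol, ncard_blue]

theorem left_label_mem (hcol : ∀ v, L.colour v = ccol (llen l) v.1) (p : {p : List Bool // p ∈ (BT.node l r).leftVertices}) :
    L.label ((eqv l r) ⟨p.1, lv_mem p⟩) ∈ Set.Icc 1 ((BT.node l r).leftVertices.card) := by
  rw [← ncard_red' l r L hcol]
  refine L.bijRed.1 ?_
  rw [Set.mem_setOf_eq, hcol]
  rw [eqv_apply]
  exact (ccol_pm (lv_mem p).1 (lv_mem p).2).mpr (mem_leftVertices.mp p.2).2

theorem right_label_mem (hcol : ∀ v, L.colour v = ccol (llen l) v.1) (p : {p : List Bool // p ∈ (BT.node l r).rightVertices}) :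
    L.label ((eqv l r) ⟨p.1, rv_mem p⟩) ∈ Set.Icc 1 ((BT.node l r).rightVertices.card) := by
  rw [← ncard_blue' l r L hcol]
  refine L.bijBlue.1 ?_
  rw [Set.mem_setOf_eq, hcol]
  rw [eqv_apply]
  exact (ccol_pm_false (rv_mem p).1 (rv_mem p).2).mpr (mem_rightVertices.mp p.2).2

/-- The reverse construction : a NAT on `node l r` from a NOTL structure on `Phi l r`
with canonical colours. -/
noncomputable def mkNAT (hcol : ∀ v, L.colour v = ccol (llen l) v.1) :
    NAT (BT.node l r) where
  fL p := ⟨L.label ((eqv l r) ⟨p.1, lv_mem p⟩) - 1, by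
    have h := left_label_mem l r L hcol p
    rw [Set.mem_Icc] at h
    omega⟩
  fR p := ⟨L.label ((eqv l r) ⟨p.1, rv_mem p⟩) - 1, by
    have h := right_label_mem l r L hcol p
    rw [Set.mem_Icc] at h
    omega⟩
  bijL := by
    constructor
    · intro p p' heq
      simp only [Fin.mk.injEq] at heq
      have h1 := left_label_mem l r L hcol p
      have h2 := left_label_mem l r L hcol p'
      rw [Set.mem_Icc] at h1 h2
      have hlabeq : L.label ((eqv l r) ⟨p.1, lv_mem p⟩)
          = L.label ((eqv l r) ⟨p'.1, lv_mem p'⟩) := by omega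
      have hmv : (eqv l r) ⟨p.1, lv_mem p⟩ ∈
          {v : {o : List ℕ // o ∈ (Phi l r).nonRoot} | L.colour v = true} := by
        rw [Set.mem_setOf_eq, hcol, eqv_apply]
        exact (ccol_pm (lv_mem p).1 (lv_mem p).2).mpr (mem_leftVertices.mp p.2).2
      have hmv' : (eqv l r) ⟨p'.1, lv_mem p'⟩ ∈
          {v : {o : List ℕ // o ∈ (Phi l r).nonRoot} | L.colour v = true} := by
        rw [Set.mem_setOf_eq, hcol, eqv_apply]
        exact (ccol_pm (lv_mem p').1 (lv_mem p').2).mpr (mem_leftVertices.mp p'.2).2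
      have := L.bijRed.2.1 hmv hmv' hlabeq
      have h3 := (eqv l r).injective this
      have h4 := congrArg Subtype.val h3
      simp only at h4
      exact Subtype.ext h4
    · intro y
      have hy : (y : ℕ) + 1 ∈ Set.Icc 1 (Set.ncard {v : {o : List ℕ //
          o ∈ (Phi l r).nonRoot} | L.colour v = true}) := by
        rw [ncard_red' l r L hcol, Set.mem_Icc]
        have := y.isLt
        omega
      obtain ⟨v, hv, hlv⟩ := L.bijRed.2.2 hy
      rw [Set.mem_setOf_eq, hcol] at hv
      have hmem := ((eqv l r).symm v).2
      have hleft : ((eqv l r).symm v).1 ∈ (BT.node l r).leftVertices :=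
        mem_leftVertices.mpr ⟨hmem.1, (ccol_pm hmem.1 hmem.2).mp (by
          rw [eqv_symm_pm]; exact hv)⟩
      refine ⟨⟨((eqv l r).symm v).1, hleft⟩, ?_⟩
      apply Fin.ext
      show L.label ((eqv l r) ⟨((eqv l r).symm v).1, _⟩) - 1 = (y : ℕ)
      have heq2 : (⟨((eqv l r).symm v).1, lv_mem ⟨((eqv l r).symm v).1, hleft⟩⟩ :
          {p : List Bool // p ∈ (BT.node l r).paths ∧ p ≠ []}) = (eqv l r).symm v :=
        Subtype.ext rfl
      rw [heq2, Equiv.apply_symm_apply, hlv]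
      simp
  bijR := by
    constructor
    · intro p p' heq
      simp only [Fin.mk.injEq] at heq
      have h1 := right_label_mem l r L hcol p
      have h2 := right_label_mem l r L hcol p'
      rw [Set.mem_Icc] at h1 h2
      have hlabeq : L.label ((eqv l r) ⟨p.1, rv_mem p⟩)
          = L.label ((eqv l r) ⟨p'.1, rv_mem p'⟩) := by omega
      have hmv : (eqv l r) ⟨p.1, rv_mem p⟩ ∈
          {v : {o : List ℕ // o ∈ (Phi l r).nonRoot} | L.colour v = false} := by
        rw [Set.mem_setOf_eq, hcol, eqv_apply]
        exact (ccol_pm_false (rv_mem p).1 (rv_mem p).2).mpr (mem_rightVertices.mp p.2).2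
      have hmv' : (eqv l r) ⟨p'.1, rv_mem p'⟩ ∈
          {v : {o : List ℕ // o ∈ (Phi l r).nonRoot} | L.colour v = false} := by
        rw [Set.mem_setOf_eq, hcol, eqv_apply]
        exact (ccol_pm_false (rv_mem p').1 (rv_mem p').2).mpr (mem_rightVertices.mp p'.2).2
      have := L.bijBlue.2.1 hmv hmv' hlabeq
      have h3 := (eqv l r).injective this
      have h4 := congrArg Subtype.val h3
      simp only at h4
      exact Subtype.ext h4
    · intro y
      have hy : (y : ℕ) + 1 ∈ Set.Icc 1 (Set.ncard {v : {o : List ℕ //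
          o ∈ (Phi l r).nonRoot} | L.colour v = false}) := by
        rw [ncard_blue' l r L hcol, Set.mem_Icc]
        have := y.isLt
        omega
      obtain ⟨v, hv, hlv⟩ := L.bijBlue.2.2 hy
      rw [Set.mem_setOf_eq, hcol] at hv
      have hmem := ((eqv l r).symm v).2
      have hright : ((eqv l r).symm v).1 ∈ (BT.node l r).rightVertices :=
        mem_rightVertices.mpr ⟨hmem.1, (ccol_pm_false hmem.1 hmem.2).mp (by
          rw [eqv_symm_pm]; exact hv)⟩
      refine ⟨⟨((eqv l r).symm v).1, hright⟩, ?_⟩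
      apply Fin.ext
      show L.label ((eqv l r) ⟨((eqv l r).symm v).1, _⟩) - 1 = (y : ℕ)
      have heq2 : (⟨((eqv l r).symm v).1, rv_mem ⟨((eqv l r).symm v).1, hright⟩⟩ :
          {p : List Bool // p ∈ (BT.node l r).paths ∧ p ≠ []}) = (eqv l r).symm v :=
        Subtype.ext rfl
      rw [heq2, Equiv.apply_symm_apply, hlv]
      simp
  ancL := by
    intro u v hpre hne
    have h1 := left_label_mem l r L hcol u
    have h2 := left_label_mem l r L hcol v
    rw [Set.mem_Icc] at h1 h2
    have hkey := rev_key l r L hcol (lv_mem u).1 (lv_mem v).1 (lv_mem u).2 (lv_mem v).2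
      (by rw [(mem_leftVertices.mp u.2).2, (mem_leftVertices.mp v.2).2])
      hpre (fun hx => hne (Subtype.ext hx))
    show L.label ((eqv l r) ⟨v.1, lv_mem v⟩) - 1 < L.label ((eqv l r) ⟨u.1, lv_mem u⟩) - 1
    omega
  ancR := by
    intro u v hpre hne
    have h1 := right_label_mem l r L hcol u
    have h2 := right_label_mem l r L hcol v
    rw [Set.mem_Icc] at h1 h2
    have hkey := rev_key l r L hcol (rv_mem u).1 (rv_mem v).1 (rv_mem u).2 (rv_mem v).2
      (by rw [(mem_rightVertices.mp u.2).2, (mem_rightVertices.mp v.2).2])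
      hpre (fun hx => hne (Subtype.ext hx))
    show L.label ((eqv l r) ⟨v.1, rv_mem v⟩) - 1 < L.label ((eqv l r) ⟨u.1, rv_mem u⟩) - 1
    omega

end Reverse

theorem NOTL_ext {O : OT} {L1 L2 : NOTL O} (h1 : L1.colour = L2.colour)
    (h2 : L1.label = L2.label) : L1 = L2 := by
  cases L1 with
  | mk c1 lab1 br1 bb1 ro1 al1 de1 =>
    cases L2 with
    | mk c2 lab2 br2 bb2 ro2 al2 de2 =>
      have hc : c1 = c2 := h1
      have hl : lab1 = lab2 := h2
      subst hc
      subst hl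
      rfl

theorem NAT_ext {B : BT} {N1 N2 : NAT B} (h1 : N1.fL = N2.fL) (h2 : N1.fR = N2.fR) :
    N1 = N2 := by
  cases N1 with
  | mk f1 g1 b1 b2 a1 a2 =>
    cases N2 with
    | mk f1' g1' b1' b2' a1' a2' =>
      have hc : f1 = f1' := h1
      have hl : g1 = g1' := h2
      subst hc
      subst hl
      rfl

theorem NOTL_heq_colour {O O' : OT} (h : O = O') {L1 : NOTL O} {L2 : NOTL O'}
    (hh : HEq L1 L2) (p : List ℕ) (h1 : p ∈ O.nonRoot) (h2 : p ∈ O'.nonRoot) :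
    L1.colour ⟨p, h1⟩ = L2.colour ⟨p, h2⟩ := by
  subst h
  rw [eq_of_heq hh]

theorem singleton_mem_pathsAux (cs : List OT) (k i : ℕ) :
    [i] ∈ OT.pathsAux k cs ↔ (k ≤ i ∧ i < k + cs.length) := by
  induction cs generalizing k with
  | nil => simp [OT.pathsAux]
  | cons c cs ih =>
    simp only [OT.pathsAux, List.mem_append, List.mem_map, ih (k+1), List.length_cons]
    constructor
    · rintro (⟨o', ho', he⟩ | ⟨h1, h2⟩)
      · have : k = i ∧ o' = [] := by
          rw [List.cons_eq_cons] at he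
          exact ⟨he.1, he.2⟩
        omega
      · omega
    · rintro ⟨h1, h2⟩
      rcases eq_or_lt_of_le h1 with rfl | hlt
      · exact Or.inl ⟨[], nil_mem_ot_paths c, rfl⟩
      · exact Or.inr ⟨by omega, by omega⟩

theorem singleton_mem_node {cs : List OT} {i : ℕ} :
    [i] ∈ (OT.node cs).nonRoot ↔ i < cs.length := by
  rw [mem_nonRoot]
  constructor
  · rintro ⟨h1, -⟩
    simp only [OT.paths, List.mem_cons] at h1
    rcases h1 with h1 | h1
    · simp at h1
    · have := (singleton_mem_pathsAux cs 0 i).mp h1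
      omega
  · intro hi
    refine ⟨?_, by simp⟩
    simp only [OT.paths, List.mem_cons]
    exact Or.inr ((singleton_mem_pathsAux cs 0 i).mpr ⟨by omega, by omega⟩)

theorem downward_eq_range {S : Finset ℕ} (h : ∀ i j, i < j → j ∈ S → i ∈ S) :
    ∀ i, i ∈ S ↔ i < S.card := by
  have hsub : ∀ i, i ∈ S → Finset.range (i+1) ⊆ S := by
    intro i hi j hj
    rw [Finset.mem_range] at hj
    rcases Nat.lt_or_ge j i with hx | hx
    · exact h j i hx hi
    · have hji : j = i := by omega
      subst hji
      exact hi
  intro i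
  constructor
  · intro hi
    have := Finset.card_le_card (hsub i hi)
    simp [Finset.card_range] at this
    omega
  · intro hi
    by_contra hno
    have hsub2 : S ⊆ Finset.range i := by
      intro j hj
      rw [Finset.mem_range]
      by_contra hge
      rcases eq_or_lt_of_le (Nat.not_lt.mp hge) with he | hlt
      · exact hno (he ▸ hj)
      · exact hno (h i j hlt hj)
    have := Finset.card_le_card hsub2
    simp [Finset.card_range] at this
    omega

theorem mkNOTL_mkNAT (l r : BT) (L : NOTL (Phi l r))
    (hcol : ∀ v, L.colour v = ccol (llen l) v.1) :
    mkNOTL l r (mkNAT l r L hcol) = L := by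
  apply NOTL_ext
  · funext v
    exact (hcol v).symm
  · funext v
    show labP l r (mkNAT l r L hcol) ((eqv l r).symm v).1 = L.label v
    have hpmem := ((eqv l r).symm v).2
    have hev : (eqv l r) ((eqv l r).symm v) = v := (eqv l r).apply_symm_apply v
    rcases getLast?_or hpmem.2 with hb | hb
    · have hl : ((eqv l r).symm v).1 ∈ (BT.node l r).leftVertices :=
        mem_leftVertices.mpr ⟨hpmem.1, hb⟩
      have hbound := left_label_mem l r L hcol ⟨((eqv l r).symm v).1, hl⟩
      rw [Set.mem_Icc] at hbound
      simp only [labP, dif_pos hl, mkNAT]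
      have he : (⟨(⟨((eqv l r).symm v).1, hl⟩ :
          {p : List Bool // p ∈ (BT.node l r).leftVertices}).1,
          lv_mem ⟨((eqv l r).symm v).1, hl⟩⟩ :
          {p : List Bool // p ∈ (BT.node l r).paths ∧ p ≠ []}) = (eqv l r).symm v :=
        Subtype.ext rfl
      rw [he, hev]
      have hge := hbound.1
      rw [he, hev] at hbound
      omega
    · have hnl : ¬ ((eqv l r).symm v).1 ∈ (BT.node l r).leftVertices := by
        rw [mem_leftVertices]
        rintro ⟨-, h2⟩
        rw [hb] at h2
        simp at h2
      have hr : ((eqv l r).symm v).1 ∈ (BT.node l r).rightVertices :=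
        mem_rightVertices.mpr ⟨hpmem.1, hb⟩
      have hbound := right_label_mem l r L hcol ⟨((eqv l r).symm v).1, hr⟩
      rw [Set.mem_Icc] at hbound
      simp only [labP, dif_neg hnl, dif_pos hr, mkNAT]
      have he : (⟨(⟨((eqv l r).symm v).1, hr⟩ :
          {p : List Bool // p ∈ (BT.node l r).rightVertices}).1,
          rv_mem ⟨((eqv l r).symm v).1, hr⟩⟩ :
          {p : List Bool // p ∈ (BT.node l r).paths ∧ p ≠ []}) = (eqv l r).symm v :=
        Subtype.ext rfl
      rw [he, hev]
      rw [he, hev] at hbound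
      omega

theorem mkNOTL_label_left (l r : BT) (N : NAT (BT.node l r))
    (p : {p : List Bool // p ∈ (BT.node l r).leftVertices}) :
    (mkNOTL l r N).label ((eqv l r) ⟨p.1, lv_mem p⟩) = (N.fL p : ℕ) + 1 := by
  show labP l r N ((eqv l r).symm ((eqv l r) ⟨p.1, lv_mem p⟩)).1 = _
  rw [Equiv.symm_apply_apply]
  simp only [labP, dif_pos p.2]

theorem mkNOTL_label_right (l r : BT) (N : NAT (BT.node l r))
    (p : {p : List Bool // p ∈ (BT.node l r).rightVertices}) :
    (mkNOTL l r N).label ((eqv l r) ⟨p.1, rv_mem p⟩) = (N.fR p : ℕ) + 1 := by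
  show labP l r N ((eqv l r).symm ((eqv l r) ⟨p.1, rv_mem p⟩)).1 = _
  rw [Equiv.symm_apply_apply]
  have hnl : ¬ p.1 ∈ (BT.node l r).leftVertices := by
    rw [mem_leftVertices]
    rintro ⟨-, h2⟩
    rw [(mem_rightVertices.mp p.2).2] at h2
    simp at h2
  simp only [labP, dif_neg hnl, dif_pos p.2]

def chl : OT → List OT
  | .node cs => cs

theorem ot_eta (O : OT) : O = OT.node (chl O) := by cases O; rfl

theorem bt_nil_size : BT.nil.size = 0 := by simp [BT.size, BT.paths]

/-- The forward map on size-`n` objects. -/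
noncomputable def Fmap {n : ℕ} (hn : 1 ≤ n) :
    {T : Σ B : BT, NAT B // T.1.size = n} → {T : Σ O : OT, NOTL O // T.1.size = n}
  | ⟨⟨BT.nil, _⟩, h⟩ => absurd h (by rw [bt_nil_size]; omega)
  | ⟨⟨BT.node l r, N⟩, h⟩ => ⟨⟨Phi l r, mkNOTL l r N⟩, by rw [Phi_size]; exact h⟩

theorem Fmap_inj {n : ℕ} (hn : 1 ≤ n) : Function.Injective (Fmap (n := n) hn) := by
  rintro ⟨⟨B, N⟩, h⟩ ⟨⟨B', N'⟩, h'⟩ heq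
  cases B with
  | nil => exact absurd h (by rw [bt_nil_size]; omega)
  | node l r =>
    cases B' with
    | nil => exact absurd h' (by rw [bt_nil_size]; omega)
    | node l' r' =>
      have hval : (⟨Phi l r, mkNOTL l r N⟩ : Σ O : OT, NOTL O)
          = ⟨Phi l' r', mkNOTL l' r' N'⟩ := congrArg Subtype.val heq
      obtain ⟨hO, hH⟩ := Sigma.ext_iff.mp hval
      have hsp : spine false l ++ spine true r = spine false l' ++ spine true r' := by
        have h2 := hO
        simp only [Phi, OT.node.injEq] at h2
        exact h2
      have hlen : llen l + rlen r = llen l' + rlen r' := by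
        have h2 := congrArg List.length hsp
        simpa [spine_length_false, spine_length_true] using h2
      have hm : llen l = llen l' := by
        by_contra hne
        rcases Nat.lt_or_ge (llen l) (llen l') with hlt | hge
        · have hmem1 : [llen l] ∈ (Phi l r).nonRoot := singleton_mem_phi.mpr (by omega)
          have hmem2 : [llen l] ∈ (Phi l' r').nonRoot := singleton_mem_phi.mpr (by omega)
          have hcc := NOTL_heq_colour hO hH [llen l] hmem1 hmem2
          have c1 : ccol (llen l) [llen l] = false := by
            cases hc : ccol (llen l) [llen l]
            · rfl
            · have := ccol_singleton.mp hc; omega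
          have c2 : ccol (llen l') [llen l] = true := ccol_singleton.mpr hlt
          rw [show (mkNOTL l r N).colour ⟨[llen l], hmem1⟩ = ccol (llen l) [llen l] from rfl,
            show (mkNOTL l' r' N').colour ⟨[llen l], hmem2⟩
              = ccol (llen l') [llen l] from rfl, c1, c2] at hcc
          simp at hcc
        · have hlt : llen l' < llen l := by omega
          have hmem1 : [llen l'] ∈ (Phi l r).nonRoot := singleton_mem_phi.mpr (by omega)
          have hmem2 : [llen l'] ∈ (Phi l' r').nonRoot := singleton_mem_phi.mpr (by omega)
          have hcc := NOTL_heq_colour hO hH [llen l'] hmem1 hmem2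
          have c1 : ccol (llen l) [llen l'] = true := ccol_singleton.mpr hlt
          have c2 : ccol (llen l') [llen l'] = false := by
            cases hc : ccol (llen l') [llen l']
            · rfl
            · have := ccol_singleton.mp hc; omega
          rw [show (mkNOTL l r N).colour ⟨[llen l'], hmem1⟩ = ccol (llen l) [llen l'] from rfl,
            show (mkNOTL l' r' N').colour ⟨[llen l'], hmem2⟩
              = ccol (llen l') [llen l'] from rfl, c1, c2] at hcc
          simp at hcc
      have hfl := List.append_inj hsp (by rw [spine_length_false, spine_length_false, hm])
      have hleq : l = l' := by
        have h2 := congrArg (unb false) hfl.1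
        rwa [unb_spine, unb_spine] at h2
      have hreq : r = r' := by
        have h2 := congrArg (unb true) hfl.2
        rwa [unb_spine, unb_spine] at h2
      subst hleq
      subst hreq
      have hLeq : mkNOTL l r N = mkNOTL l r N' := eq_of_heq hH
      have hNeq : N = N' := by
        apply NAT_ext
        · funext p
          have h1 := mkNOTL_label_left l r N p
          have h2 := mkNOTL_label_left l r N' p
          rw [hLeq] at h1
          apply Fin.ext
          omega
        · funext p
          have h1 := mkNOTL_label_right l r N p
          have h2 := mkNOTL_label_right l r N' p
          rw [hLeq] at h1
          apply Fin.ext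
          omega
      subst hNeq
      exact Subtype.ext rfl

theorem Fmap_surj {n : ℕ} (hn : 1 ≤ n) : Function.Surjective (Fmap (n := n) hn) := by
  rintro ⟨⟨O, L⟩, hsize⟩
  obtain ⟨cs, hcs⟩ : ∃ cs, O = OT.node cs := ⟨chl O, ot_eta O⟩
  classical
  obtain ⟨colB, hcolB⟩ : ∃ f : ℕ → Bool,
      f = fun i => if h : [i] ∈ O.nonRoot then L.colour ⟨[i], h⟩ else false := ⟨_, rfl⟩
  obtain ⟨S, hSdef⟩ : ∃ s : Finset ℕ,
      s = (Finset.range cs.length).filter (fun i => colB i = true) := ⟨_, rfl⟩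
  obtain ⟨r0, hr0⟩ : ∃ m, m = S.card := ⟨_, rfl⟩
  obtain ⟨l, hl⟩ : ∃ B, B = unb false (cs.take r0) := ⟨_, rfl⟩
  obtain ⟨r, hr⟩ : ∃ B, B = unb true (cs.drop r0) := ⟨_, rfl⟩
  have hPhi : Phi l r = O := by
    rw [hcs, Phi, hl, hr, spine_unb _ (cs.take r0) rfl false,
      spine_unb _ (cs.drop r0) rfl true, List.take_append_drop]
  subst hPhi
  -- facts about S
  have hdc : ∀ i j, i < j → j ∈ S → i ∈ S := by
    intro i j hij hj
    rw [hSdef, Finset.mem_filter, Finset.mem_range] at hj ⊢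
    obtain ⟨hjlen, hjcol⟩ := hj
    have hilen : i < cs.length := by omega
    refine ⟨hilen, ?_⟩
    have hmemi : [i] ∈ (Phi l r).nonRoot := by rw [hcs]; exact singleton_mem_node.mpr hilen
    have hmemj : [j] ∈ (Phi l r).nonRoot := by rw [hcs]; exact singleton_mem_node.mpr hjlen
    rw [hcolB]
    simp only [dif_pos hmemi]
    by_contra hci
    have hci' : L.colour ⟨[i], hmemi⟩ = false := by
      cases hc : L.colour ⟨[i], hmemi⟩
      · rfl
      · exact absurd hc hci
    have hcj' : L.colour ⟨[j], hmemj⟩ = true := by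
      rw [hcolB] at hjcol
      simpa [dif_pos hmemj] using hjcol
    have := L.rootOrder j i hmemj hmemi hcj' hci'
    omega
  have hiff := downward_eq_range hdc
  have hr0le : r0 ≤ cs.length := by
    rw [hr0, hSdef]
    exact (Finset.card_filter_le _ _).trans (by simp)
  have hll : llen l = r0 := by
    rw [hl, llen_unb, List.length_take]
    omega
  -- root colours
  have hroot : ∀ i (hi : [i] ∈ (Phi l r).nonRoot),
      (L.colour ⟨[i], hi⟩ = true ↔ i < llen l) := by
    intro i hi
    have hilen : i < cs.length := by
      rw [hcs] at hi
      exact singleton_mem_node.mp hi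
    have hcol_colB : L.colour ⟨[i], hi⟩ = colB i := by
      rw [hcolB]
      simp only [dif_pos hi]
    rw [hcol_colB, hll]
    constructor
    · intro hct
      have hmem : i ∈ S := by
        rw [hSdef, Finset.mem_filter, Finset.mem_range]
        exact ⟨hilen, hct⟩
      have := (hiff i).mp hmem
      omega
    · intro hlt
      have hmem : i ∈ S := (hiff i).mpr (by omega)
      rw [hSdef, Finset.mem_filter] at hmem
      exact hmem.2
  have hcol := colour_canonical l r L hroot
  refine ⟨⟨⟨BT.node l r, mkNAT l r L hcol⟩, by rw [← Phi_size]; exact hsize⟩, ?_⟩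
  apply Subtype.ext
  show (⟨Phi l r, mkNOTL l r (mkNAT l r L hcol)⟩ : Σ O : OT, NOTL O) = ⟨Phi l r, L⟩
  exact congrArg (Sigma.mk (Phi l r)) (mkNOTL_mkNAT l r L hcol)

end AuxNAT

/-- Non-ambiguous trees with `n ≥ 1` vertices are equinumerous with the
labelled ordered trees of the class `NOT` with `n` vertices. -/
theorem natCount_eq_notCount (n : ℕ) (hn : 1 ≤ n) :
    Nat.card {T : Σ B : BT, NAT B // T.1.size = n} =
      Nat.card {T : Σ O : OT, NOTL O // T.1.size = n} :=
  Nat.card_congr (Equiv.ofBijective (AuxNAT.Fmap hn)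
    ⟨AuxNAT.Fmap_inj hn, AuxNAT.Fmap_surj hn⟩)
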